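/- arXiv:1705.08971 — 15 statements merged into one kernel-verified Lean document; each statement's English description precedes it below -/
import Mathlib

section
/- Let m and n be positive integers, let L : Fin m → Fin n → ℝ be row-stochastic with zero rows allowed, and let T : Fin m → Fin n → ℝ be column-stochastic with zero columns allowed. Then TI(L,T) = 1 if and only if both of the following hold: (i) for all i, j, if T i j > 0 then L i j = 1; and (ii) no column of L is identically zero and no column of T is identically zero. -/
open Finset

/-- `TI(L,T) = 1` iff (i) `T i j > 0 → L i j = 1` for all `i, j`, and
(ii) no column of `L` and no column of `T` is identically zero. -/
theorem transmission_index_eq_one_iff (m n : ℕ) (hm : 0 < m) (hn : 0 < n)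
    (L T : Fin m → Fin n → ℝ)
    (hLnn : ∀ i j, 0 ≤ L i j)
    (hLrow : ∀ i, (∑ j, L i j) = 1 ∨ ∀ j, L i j = 0)
    (hTnn : ∀ i j, 0 ≤ T i j)
    (hTcol : ∀ j, (∑ i, T i j) = 1 ∨ ∀ i, T i j = 0) :
    (1 / (n : ℝ)) * ∑ j, ∑ i, L i j * T i j = 1 ↔
      ((∀ i j, 0 < T i j → L i j = 1) ∧
        (∀ j, ∃ i, L i j ≠ 0) ∧ (∀ j, ∃ i, T i j ≠ 0)) := by
  have hn' : (n : ℝ) ≠ 0 := Nat.cast_ne_zero.mpr hn.ne'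
  have hL1 : ∀ i j, L i j ≤ 1 := by
    intro i j
    rcases hLrow i with h | h
    · calc L i j ≤ ∑ k, L i k := Finset.single_le_sum (fun k _ => hLnn i k) (mem_univ j)
      _ = 1 := h
    · simp [h j]
  have hterm : ∀ i j, L i j * T i j ≤ T i j := fun i j =>
    mul_le_of_le_one_left (hTnn i j) (hL1 i j)
  have hSle : ∀ j, (∑ i, L i j * T i j) ≤ 1 := by
    intro j
    calc (∑ i, L i j * T i j) ≤ ∑ i, T i j :=
          Finset.sum_le_sum fun i _ => hterm i j
      _ ≤ 1 := by
          rcases hTcol j with h | h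
          · exact h.le
          · simp [h]
  have key : (1 / (n : ℝ)) * ∑ j, ∑ i, L i j * T i j = 1 ↔
      ∀ j, (∑ i, L i j * T i j) = 1 := by
    rw [div_mul_eq_mul_div, one_mul, div_eq_one_iff_eq hn']
    constructor
    · intro h j
      have := (Finset.sum_eq_sum_iff_of_le (f := fun j => ∑ i, L i j * T i j)
        (g := fun _ => (1:ℝ)) (fun j _ => hSle j)).mp (by simpa using h) j (mem_univ j)
      simpa using this
    · intro h
      simp [h]
  rw [key]
  constructor
  · intro h
    have hTne : ∀ j, ∃ i, T i j ≠ 0 := by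
      intro j
      by_contra hc
      push_neg at hc
      have : (∑ i, L i j * T i j) = 0 := by
        apply Finset.sum_eq_zero
        intro i _
        simp [hc i]
      rw [h j] at this
      exact one_ne_zero this
    have hTsum : ∀ j, (∑ i, T i j) = 1 := by
      intro j
      rcases hTcol j with h' | h'
      · exact h'
      · obtain ⟨i, hi⟩ := hTne j
        exact absurd (h' i) hi
    have heq : ∀ i j, L i j * T i j = T i j := by
      intro i j
      have := (Finset.sum_eq_sum_iff_of_le (f := fun i => L i j * T i j)
        (g := fun i => T i j) (fun i _ => hterm i j)).mp
        (by rw [h j, hTsum j]) i (mem_univ i)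
      exact this
    have hLT : ∀ i j, 0 < T i j → L i j = 1 := by
      intro i j hT
      have h' : L i j * T i j = 1 * T i j := by rw [one_mul]; exact heq i j
      exact mul_right_cancel₀ hT.ne' h'
    refine ⟨hLT, fun j => ?_, hTne⟩
    obtain ⟨i, hi⟩ := hTne j
    have hTpos : 0 < T i j := lt_of_le_of_ne (hTnn i j) (Ne.symm hi)
    exact ⟨i, by rw [hLT i j hTpos]; exact one_ne_zero⟩
  · rintro ⟨h1, _, h3⟩ j
    have hTsum : (∑ i, T i j) = 1 := by
      rcases hTcol j with h' | h'
      · exact h'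
      · obtain ⟨i, hi⟩ := h3 j
        exact absurd (h' i) hi
    calc (∑ i, L i j * T i j) = ∑ i, T i j := by
          apply Finset.sum_congr rfl
          intro i _
          rcases eq_or_lt_of_le (hTnn i j) with h0 | hpos
          · simp [← h0]
          · rw [h1 i j hpos, one_mul]
      _ = 1 := hTsum
end

section
/- Let m and n be positive integers, let L : Fin m → Fin n → ℝ be row-stochastic with zero rows allowed, and let T : Fin m → Fin n → ℝ be column-stochastic with zero columns allowed. If TI(L,T) = 1, then m ≥ n (the number of data sets is at least the number of concepts). -/
open Finset

/-- If `TI(L,T) = 1` then the number of data sets is at least the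
number of concepts, i.e. `m ≥ n`. -/
theorem transmission_index_eq_one_dim (m n : ℕ) (hm : 0 < m) (hn : 0 < n)
    (L T : Fin m → Fin n → ℝ)
    (hLnn : ∀ i j, 0 ≤ L i j)
    (hLrow : ∀ i, (∑ j, L i j) = 1 ∨ ∀ j, L i j = 0)
    (hTnn : ∀ i j, 0 ≤ T i j)
    (hTcol : ∀ j, (∑ i, T i j) = 1 ∨ ∀ i, T i j = 0)
    (hTI : (1 / (n : ℝ)) * ∑ j, ∑ i, L i j * T i j = 1) :
    n ≤ m := by
  have hn0 : (n : ℝ) ≠ 0 := Nat.cast_ne_zero.mpr hn.ne'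
  have hs : ∑ j, ∑ i, L i j * T i j = (n : ℝ) := by
    field_simp at hTI
    linarith
  have hT1 : ∀ i j, T i j ≤ 1 := by
    intro i j
    rcases hTcol j with h | h
    · calc T i j ≤ ∑ i, T i j := single_le_sum (fun k _ => hTnn k j) (mem_univ i)
        _ = 1 := h
    · rw [h i]; norm_num
  have hle : (n : ℝ) ≤ (m : ℝ) := by
    rw [← hs, Finset.sum_comm]
    calc ∑ i, ∑ j, L i j * T i j
        ≤ ∑ i : Fin m, ∑ j, L i j := by
          refine Finset.sum_le_sum fun i _ => Finset.sum_le_sum fun j _ => ?_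
          calc L i j * T i j ≤ L i j * 1 :=
            mul_le_mul_of_nonneg_left (hT1 i j) (hLnn i j)
          _ = L i j := mul_one _
      _ ≤ ∑ i : Fin m, (1 : ℝ) := by
          refine Finset.sum_le_sum fun i _ => ?_
          rcases hLrow i with h | h
          · exact h.le
          · simp [h]
      _ = (m : ℝ) := by simp
  exact_mod_cast hle
end

section
/- Let n be a positive integer, let L : Fin n → Fin n → ℝ be row-stochastic with zero rows allowed, and let T : Fin n → Fin n → ℝ be column-stochastic with zero columns allowed. Then TI(L,T) = 1 if and only if there exists a permutation σ of Fin n such that L i j = (if σ i = j then 1 else 0) for all i, j, and T = L; that is, TI equals 1 exactly when L and T are the same permutation matrix. -/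
open Finset

/-- In the square case, `TI(L,T) = 1` iff `L` and `T` are the same
permutation matrix. -/
theorem transmission_index_eq_one_iff_perm (n : ℕ) (hn : 0 < n)
    (L T : Fin n → Fin n → ℝ)
    (hLnn : ∀ i j, 0 ≤ L i j)
    (hLrow : ∀ i, (∑ j, L i j) = 1 ∨ ∀ j, L i j = 0)
    (hTnn : ∀ i j, 0 ≤ T i j)
    (hTcol : ∀ j, (∑ i, T i j) = 1 ∨ ∀ i, T i j = 0) :
    (1 / (n : ℝ)) * ∑ j, ∑ i, L i j * T i j = 1 ↔
      ∃ σ : Equiv.Perm (Fin n),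
        (∀ i j, L i j = if σ i = j then 1 else 0) ∧ T = L := by
  classical
  have hn' : (n : ℝ) ≠ 0 := Nat.cast_ne_zero.mpr hn.ne'
  have hL1 : ∀ i j, L i j ≤ 1 := by
    intro i j
    rcases hLrow i with h | h
    · calc L i j ≤ ∑ k, L i k :=
          Finset.single_le_sum (fun k _ => hLnn i k) (mem_univ j)
        _ = 1 := h
    · simp [h j]
  have hT1 : ∀ i j, T i j ≤ 1 := by
    intro i j
    rcases hTcol j with h | h
    · calc T i j ≤ ∑ k, T k j :=
          Finset.single_le_sum (fun k _ => hTnn k j) (mem_univ i)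
        _ = 1 := h
    · simp [h i]
  constructor
  · intro hTI
    have hS : ∑ j, ∑ i, L i j * T i j = n := by
      field_simp at hTI
      linarith
    -- column bounds
    have hcol_le : ∀ j, (∑ i, L i j * T i j) ≤ 1 := by
      intro j
      have h1 : (∑ i, L i j * T i j) ≤ ∑ i, T i j :=
        Finset.sum_le_sum fun i _ => mul_le_of_le_one_left (hTnn i j) (hL1 i j)
      rcases hTcol j with h | h
      · linarith
      · have : (∑ i, T i j) = 0 := by simp [h]
        linarith
    have hcard : ∑ _j : Fin n, (1:ℝ) = n := by simp
    have hcol_eq : ∀ j, (∑ i, L i j * T i j) = 1 := by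
      intro j0
      by_contra hne
      have hlt : (∑ i, L i j0 * T i j0) < 1 := lt_of_le_of_ne (hcol_le j0) hne
      have := Finset.sum_lt_sum (f := fun j => ∑ i, L i j * T i j)
        (g := fun _ => (1:ℝ)) (fun j _ => hcol_le j) ⟨j0, mem_univ j0, hlt⟩
      rw [hS, hcard] at this
      exact lt_irrefl _ this
    -- row bounds (via swapped sum)
    have hS' : ∑ i, ∑ j, L i j * T i j = n := by
      rw [Finset.sum_comm]; exact hS
    have hrow_le : ∀ i, (∑ j, L i j * T i j) ≤ 1 := by
      intro i
      have h1 : (∑ j, L i j * T i j) ≤ ∑ j, L i j :=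
        Finset.sum_le_sum fun j _ => mul_le_of_le_one_right (hLnn i j) (hT1 i j)
      rcases hLrow i with h | h
      · linarith
      · have : (∑ j, L i j) = 0 := by simp [h]
        linarith
    have hrow_eq : ∀ i, (∑ j, L i j * T i j) = 1 := by
      intro i0
      by_contra hne
      have hlt : (∑ j, L i0 j * T i0 j) < 1 := lt_of_le_of_ne (hrow_le i0) hne
      have := Finset.sum_lt_sum (f := fun i => ∑ j, L i j * T i j)
        (g := fun _ => (1:ℝ)) (fun i _ => hrow_le i) ⟨i0, mem_univ i0, hlt⟩
      rw [hS', hcard] at this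
      exact lt_irrefl _ this
    -- column sums of T are 1, and T i j = L i j * T i j
    have hTcolsum : ∀ j, (∑ i, T i j) = 1 := by
      intro j
      rcases hTcol j with h | h
      · exact h
      · exfalso
        have : (∑ i, L i j * T i j) = 0 := by
          apply Finset.sum_eq_zero; intro i _; simp [h i]
        rw [hcol_eq j] at this; norm_num at this
    have hTeq : ∀ i j, T i j = L i j * T i j := by
      intro i j
      have hzero : ∑ i, (T i j - L i j * T i j) = 0 := by
        rw [Finset.sum_sub_distrib, hTcolsum j, hcol_eq j]; ring
      have hnn : ∀ i ∈ Finset.univ, 0 ≤ T i j - L i j * T i j := by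
        intro i _
        have := mul_le_of_le_one_left (hTnn i j) (hL1 i j)
        linarith
      have := (Finset.sum_eq_zero_iff_of_nonneg hnn).mp hzero i (mem_univ i)
      linarith
    -- row sums of L are 1, and L i j = L i j * T i j
    have hLrowsum : ∀ i, (∑ j, L i j) = 1 := by
      intro i
      rcases hLrow i with h | h
      · exact h
      · exfalso
        have : (∑ j, L i j * T i j) = 0 := by
          apply Finset.sum_eq_zero; intro j _; simp [h j]
        rw [hrow_eq i] at this; norm_num at this
    have hLeq : ∀ i j, L i j = L i j * T i j := by
      intro i j
      have hzero : ∑ j, (L i j - L i j * T i j) = 0 := by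
        rw [Finset.sum_sub_distrib, hLrowsum i, hrow_eq i]; ring
      have hnn : ∀ j ∈ Finset.univ, 0 ≤ L i j - L i j * T i j := by
        intro j _
        have := mul_le_of_le_one_right (hLnn i j) (hT1 i j)
        linarith
      have := (Finset.sum_eq_zero_iff_of_nonneg hnn).mp hzero j (mem_univ j)
      linarith
    have hTL : ∀ i j, T i j = L i j := by
      intro i j; rw [hTeq i j, ← hLeq i j]
    have h01 : ∀ i j, L i j = 0 ∨ L i j = 1 := by
      intro i j
      have h : L i j = L i j * L i j := by
        conv_lhs => rw [hLeq i j, hTL i j]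
      have : L i j * (L i j - 1) = 0 := by ring_nf; linarith [h]
      rcases mul_eq_zero.mp this with h' | h'
      · exact Or.inl h'
      · exact Or.inr (by linarith)
    -- column sums of L are 1 too
    have hLcolsum : ∀ j, (∑ i, L i j) = 1 := by
      intro j
      rw [← hTcolsum j]
      exact Finset.sum_congr rfl fun i _ => (hTL i j).symm
    -- each row has an entry equal to 1
    have hex : ∀ i, ∃ j, L i j = 1 := by
      intro i
      by_contra h
      push_neg at h
      have : (∑ j, L i j) = 0 := by
        apply Finset.sum_eq_zero; intro j _
        rcases h01 i j with h' | h'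
        · exact h'
        · exact absurd h' (h j)
      rw [hLrowsum i] at this; norm_num at this
    choose f hf using hex
    -- pair-sum helper
    have pair_le : ∀ (g : Fin n → ℝ), (∀ k, 0 ≤ g k) → ∀ a b : Fin n, a ≠ b →
        g a + g b ≤ ∑ k, g k := by
      intro g hg a b hab
      have hsub : ({a, b} : Finset (Fin n)) ⊆ Finset.univ := Finset.subset_univ _
      have := Finset.sum_le_sum_of_subset_of_nonneg hsub (fun k _ _ => hg k)
      rwa [Finset.sum_pair hab] at this
    have hinj : Function.Injective f := by
      intro a b hab
      by_contra hne
      have h1 : L a (f a) + L b (f a) ≤ ∑ i, L i (f a) := by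
        apply pair_le (fun i => L i (f a)) (fun i => hLnn i (f a)) a b hne
      rw [hLcolsum (f a), hf a, hab, hf b] at h1
      norm_num at h1
    have hbij : Function.Bijective f := Finite.injective_iff_bijective.mp hinj
    refine ⟨Equiv.ofBijective f hbij, ?_, ?_⟩
    · intro i j
      by_cases hij : (Equiv.ofBijective f hbij) i = j
      · simp only [hij, if_true]
        have : f i = j := hij
        rw [← this]; exact hf i
      · simp only [hij, if_false]
        have hfij : f i ≠ j := hij
        rcases h01 i j with h' | h'
        · exact h'
        · exfalso
          have h1 : L i (f i) + L i j ≤ ∑ k, L i k := by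
            apply pair_le (fun k => L i k) (fun k => hLnn i k) (f i) j hfij
          rw [hLrowsum i, hf i, h'] at h1
          norm_num at h1
    · funext i j; exact hTL i j
  · rintro ⟨σ, hL, hT⟩
    rw [hT]
    have hinner : ∀ j, (∑ i, L i j * L i j) = 1 := by
      intro j
      have : ∀ i, L i j * L i j = if i = σ.symm j then (1:ℝ) else 0 := by
        intro i
        rw [hL i j]
        by_cases h : σ i = j
        · have : i = σ.symm j := by rw [← h, Equiv.symm_apply_apply]
          simp [h, this]
        · have : i ≠ σ.symm j := by
            intro hc; exact h (by rw [hc, Equiv.apply_symm_apply])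
          simp [h, this]
      rw [Finset.sum_congr rfl fun i _ => this i]
      simp
    rw [Finset.sum_congr rfl fun j _ => hinner j]
    simp
    field_simp
end

section
/- Let N be a positive integer and C : Fin N → Fin N → ℝ a matrix with every entry equal to 0 or 1 (C i j = 1 means concept j is consistent with data set i). Let L be the row normalization of C and T the column normalization of C. Then every concept has a teaching set (i.e., for every column j there exists a row i with C i j = 1 and C i k = 0 for all k ≠ j) if and only if TI(L,T) = 1. (Equivalently, the Average Teaching Dimension of the concept space is finite if and only if TI(L,T) = 1.) -/
open Finset

/-- For a 0/1 consistency matrix `C` with row normalization `L` and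
column normalization `T`, every concept has a teaching set (so the Average
Teaching Dimension is finite) iff `TI(L,T) = 1`. -/
theorem atd_finite_iff_TI_eq_one (N : ℕ) (hN : 0 < N)
    (C : Fin N → Fin N → ℝ)
    (hC : ∀ i j, C i j = 0 ∨ C i j = 1)
    (L T : Fin N → Fin N → ℝ)
    (hL : ∀ i j, L i j = if 0 < (∑ k, C i k) then C i j / (∑ k, C i k) else 0)
    (hT : ∀ i j, T i j = if 0 < (∑ k, C k j) then C i j / (∑ k, C k j) else 0) :
    (∀ j, ∃ i, C i j = 1 ∧ ∀ k, k ≠ j → C i k = 0) ↔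
      (1 / (N : ℝ)) * ∑ j, ∑ i, L i j * T i j = 1 := by
  have hC0 : ∀ i j, 0 ≤ C i j := fun i j => by rcases hC i j with h | h <;> simp [h]
  have hNR : (N : ℝ) ≠ 0 := Nat.cast_ne_zero.mpr hN.ne'
  set r : Fin N → ℝ := fun i => ∑ k, C i k with hrdef
  set c : Fin N → ℝ := fun j => ∑ k, C k j with hcdef
  have hr0 : ∀ i, 0 ≤ r i := fun i => Finset.sum_nonneg fun k _ => hC0 i k
  have hc0 : ∀ j, 0 ≤ c j := fun j => Finset.sum_nonneg fun k _ => hC0 k j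
  have hr1 : ∀ i j, C i j = 1 → 1 ≤ r i := fun i j h => by
    calc (1:ℝ) = C i j := h.symm
    _ ≤ r i := Finset.single_le_sum (fun k _ => hC0 i k) (mem_univ j)
  have hc1 : ∀ i j, C i j = 1 → 1 ≤ c j := fun i j h => by
    calc (1:ℝ) = C i j := h.symm
    _ ≤ c j := Finset.single_le_sum (fun k _ => hC0 k j) (mem_univ i)
  constructor
  · -- forward
    intro H
    choose e he1 he2 using H
    have einj : Function.Injective e := by
      intro a b hab
      by_contra hne
      have h0 := he2 a b fun h => hne h.symm
      rw [hab, he1 b] at h0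
      norm_num at h0
    have esurj : Function.Surjective e := Finite.surjective_of_injective einj
    have hCiff : ∀ i j, C i j = 1 ↔ i = e j := by
      intro i j
      constructor
      · intro h
        obtain ⟨j', rfl⟩ := esurj i
        by_contra hne
        have hjj : j ≠ j' := by
          intro hh; subst hh; exact hne rfl
        have := he2 j' j hjj
        rw [this] at h; norm_num at h
      · intro h; subst h; exact he1 j
    have hCval : ∀ i j, C i j = if i = e j then 1 else 0 := by
      intro i j
      by_cases h : i = e j
      · subst h; simp [he1 j]
      · rcases hC i j with h0 | h1
        · simp [h, h0]
        · exact absurd ((hCiff i j).mp h1) h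
    have hrval : ∀ i, r i = 1 := by
      intro i
      obtain ⟨j', rfl⟩ := esurj i
      have : r (e j') = ∑ k, if j' = k then (1:ℝ) else 0 :=
        Finset.sum_congr rfl fun k _ => by rw [hCval]; simp [einj.eq_iff]
      rw [this]; simp
    have hcval : ∀ j, c j = 1 := by
      intro j
      have : c j = ∑ i, if i = e j then (1:ℝ) else 0 :=
        Finset.sum_congr rfl fun i _ => hCval i j
      rw [this]; simp
    have hS : ∀ j, ∑ i, L i j * T i j = 1 := by
      intro j
      have : ∀ i, L i j * T i j = C i j := by
        intro i
        rw [hL, hT]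
        show (if 0 < r i then C i j / r i else 0) * (if 0 < c j then C i j / c j else 0) = C i j
        rw [hrval i, hcval j]
        rcases hC i j with h | h <;> simp [h]
      rw [Finset.sum_congr rfl fun i _ => this i]
      exact hcval j
    rw [Finset.sum_congr rfl fun j _ => hS j]
    simp [hNR]
  · -- backward
    intro hTI
    have hsum : ∑ j, ∑ i, L i j * T i j = (N : ℝ) := by
      field_simp at hTI
      linarith [hTI]
    -- termwise bound inside a positive column
    have hterm : ∀ j, 0 < c j → ∀ i, L i j * T i j ≤ C i j / c j := by
      intro j hcj i
      have hT' : T i j = C i j / c j := by rw [hT]; exact if_pos hcj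
      have hL1 : L i j ≤ 1 := by
        rw [hL]
        show (if 0 < r i then C i j / r i else 0) ≤ 1
        by_cases h : 0 < r i
        · rw [if_pos h]
          rcases hC i j with h0 | h1
          · simp [h0]
          · rw [div_le_one h, h1]; exact hr1 i j h1
        · simp [h]
      have hTnn : 0 ≤ T i j := by
        rw [hT']; exact div_nonneg (hC0 i j) (hc0 j)
      calc L i j * T i j ≤ 1 * T i j := mul_le_mul_of_nonneg_right hL1 hTnn
        _ = C i j / c j := by rw [one_mul, hT']
    have hSle : ∀ j, ∑ i, L i j * T i j ≤ 1 := by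
      intro j
      by_cases hcj : 0 < c j
      · calc ∑ i, L i j * T i j ≤ ∑ i, C i j / c j :=
            Finset.sum_le_sum fun i _ => hterm j hcj i
          _ = c j / c j := by rw [← Finset.sum_div]
          _ = 1 := div_self hcj.ne'
      · have : ∀ i, T i j = 0 := fun i => by rw [hT]; exact if_neg hcj
        simp [this]
    have hSeq : ∀ j, ∑ i, L i j * T i j = 1 := by
      have h1 : ∑ j : Fin N, ∑ i, L i j * T i j = ∑ j : Fin N, (1:ℝ) := by
        rw [hsum]; simp
      have := (Finset.sum_eq_sum_iff_of_le fun j _ => hSle j).mp h1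
      exact fun j => this j (mem_univ j)
    intro j
    have hSj := hSeq j
    have hcj : 0 < c j := by
      by_contra hcj
      have : ∀ i, T i j = 0 := fun i => by rw [hT]; exact if_neg hcj
      rw [Finset.sum_congr rfl fun i _ => by rw [this i, mul_zero]] at hSj
      simp at hSj
    -- termwise equality
    have heq : ∀ i, L i j * T i j = C i j / c j := by
      have h1 : ∑ i, L i j * T i j = ∑ i, C i j / c j := by
        rw [hSj, ← Finset.sum_div, div_self hcj.ne']
      have := (Finset.sum_eq_sum_iff_of_le fun i _ => hterm j hcj i).mp h1
      exact fun i => this i (mem_univ i)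
    -- exists i with C i j = 1
    have hex : ∃ i, C i j = 1 := by
      by_contra hno
      push_neg at hno
      have : ∀ i, C i j = 0 := fun i => (hC i j).resolve_right (hno i)
      have : c j = 0 := Finset.sum_eq_zero fun i _ => this i
      exact hcj.ne' this
    obtain ⟨i, hi⟩ := hex
    refine ⟨i, hi, ?_⟩
    -- show L i j = 1, hence r i = 1
    have hri : 0 < r i := lt_of_lt_of_le one_pos (hr1 i j hi)
    have hLval : L i j = 1 / r i := by rw [hL]; show (if 0 < r i then C i j / r i else 0) = 1 / r i; rw [if_pos hri, hi]
    have hTval : T i j = 1 / c j := by rw [hT]; show (if 0 < c j then C i j / c j else 0) = 1 / c j; rw [if_pos hcj, hi]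
    have heqi := heq i
    rw [hLval, hTval, hi] at heqi
    have h1r : (1:ℝ) / r i = 1 := by
      have hc' : (1:ℝ) / c j ≠ 0 := by positivity
      have h2 : (1 / r i) * (1 / c j) = 1 * (1 / c j) := by rw [heqi, one_mul]
      exact mul_right_cancel₀ hc' h2
    have hri1 : r i = 1 := by
      field_simp at h1r
      linarith
    intro k hk
    have hsplit : C i j + ∑ k ∈ univ.erase j, C i k = 1 := by
      rw [Finset.add_sum_erase univ (C i) (mem_univ j)]
      exact hri1
    have hz : ∑ k ∈ univ.erase j, C i k = 0 := by rw [hi] at hsplit; linarith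
    have hall := (Finset.sum_eq_zero_iff_of_nonneg fun k _ => hC0 i k).mp hz
    exact hall k (Finset.mem_erase.mpr ⟨hk, mem_univ k⟩)
end

section
/- Let n be a positive integer and M : Fin n → Fin n → ℝ a nonnegative matrix with at least one positive diagonal, i.e., there exists a permutation σ of Fin n with M i (σ i) > 0 for all i. Then there exists a doubly stochastic matrix S (nonnegative entries, all row sums and all column sums equal to 1) such that both sequences of Sinkhorn iterates L⁽ᵏ⁾ and T⁽ᵏ⁾ converge entrywise to S as k → ∞. -/
open Finset

/-- Row normalization: `R(A) i j = A i j / ∑ k, A i k`. -/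
noncomputable def rowNorm {n : ℕ} (A : Fin n → Fin n → ℝ) : Fin n → Fin n → ℝ :=
  fun i j => A i j / ∑ k, A i k

/-- Column normalization: `N(A) i j = A i j / ∑ k, A k j`. -/
noncomputable def colNorm {n : ℕ} (A : Fin n → Fin n → ℝ) : Fin n → Fin n → ℝ :=
  fun i j => A i j / ∑ k, A k j

/-- Sinkhorn iterates `L⁽ᵏ⁺¹⁾`: `sinkhornL M 0 = L⁽¹⁾ = R(M)`,
`sinkhornL M (k+1) = L⁽ᵏ⁺²⁾ = R(N(L⁽ᵏ⁺¹⁾))`. -/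
noncomputable def sinkhornL {n : ℕ} (M : Fin n → Fin n → ℝ) : ℕ → (Fin n → Fin n → ℝ)
  | 0 => rowNorm M
  | k + 1 => rowNorm (colNorm (sinkhornL M k))

/-- Sinkhorn iterates `T⁽ᵏ⁺¹⁾ = N(L⁽ᵏ⁺¹⁾)`. -/
noncomputable def sinkhornT {n : ℕ} (M : Fin n → Fin n → ℝ) (k : ℕ) : Fin n → Fin n → ℝ :=
  colNorm (sinkhornL M k)

namespace Sinkhorn6

open Real Filter

lemma log_quad {x : ℝ} (hx : 0 < x) :
    (Real.sqrt x - 1) ^ 2 ≤ x - 1 - Real.log x := by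
  have h1 : Real.log (Real.sqrt x) ≤ Real.sqrt x - 1 :=
    Real.log_le_sub_one_of_pos (Real.sqrt_pos.2 hx)
  have h2 : Real.log x = 2 * Real.log (Real.sqrt x) := by
    rw [Real.log_sqrt hx.le]; ring
  have h3 : Real.sqrt x ^ 2 = x := Real.sq_sqrt hx.le
  nlinarith [h1, h2, h3]

noncomputable def KL {n : ℕ} (S A : Fin n → Fin n → ℝ) : ℝ :=
  ∑ i, ∑ j, S i j * Real.log (S i j / A i j)

lemma term_ge {s a : ℝ} (hs : 0 ≤ s) (ha : 0 ≤ a) (hsa : 0 < s → 0 < a) :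
    s - a ≤ s * Real.log (s / a) := by
  rcases eq_or_lt_of_le hs with h | h
  · simp [← h, ha]
  · have ha' : 0 < a := hsa h
    have := Real.log_le_sub_one_of_pos (div_pos ha' h)
    have hlog : Real.log (s / a) = - Real.log (a / s) := by
      rw [← Real.log_inv, inv_div]
    nlinarith [mul_le_mul_of_nonneg_left this h.le, mul_div_cancel₀ a h.ne']

lemma KL_nonneg {n : ℕ} {S A : Fin n → Fin n → ℝ}
    (hS : ∀ i j, 0 ≤ S i j) (hA : ∀ i j, 0 ≤ A i j)
    (hSA : ∀ i j, 0 < S i j → 0 < A i j)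
    (hmass : ∑ i, ∑ j, A i j ≤ ∑ i, ∑ j, S i j) : 0 ≤ KL S A := by
  have h : ∑ i, ∑ j, (S i j - A i j) ≤ KL S A := by
    apply Finset.sum_le_sum; intro i _
    apply Finset.sum_le_sum; intro j _
    exact term_ge (hS i j) (hA i j) (hSA i j)
  have h2 : ∑ i, ∑ j, (S i j - A i j) = (∑ i, ∑ j, S i j) - ∑ i, ∑ j, A i j := by
    simp [Finset.sum_sub_distrib]
  linarith

lemma KL_step {n : ℕ} {S L L' : Fin n → Fin n → ℝ} {c r : Fin n → ℝ}
    (hS : ∀ i j, 0 ≤ S i j)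
    (hSrow : ∀ i, ∑ j, S i j = 1) (hScol : ∀ j, ∑ i, S i j = 1)
    (hc : ∀ j, 0 < c j) (hr : ∀ i, 0 < r i)
    (hL' : ∀ i j, L' i j = L i j / (c j * r i))
    (hpos : ∀ i j, S i j ≠ 0 → 0 < L i j) :
    KL S L' = KL S L + (∑ j, Real.log (c j)) + (∑ i, Real.log (r i)) := by
  have key : ∀ i j, S i j * Real.log (S i j / L' i j)
      = S i j * Real.log (S i j / L i j) + S i j * Real.log (c j) + S i j * Real.log (r i) := by
    intro i j
    rcases eq_or_ne (S i j) 0 with h | h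
    · simp [h]
    · have hSij : 0 < S i j := lt_of_le_of_ne (hS i j) (Ne.symm h)
      have hLij : 0 < L i j := hpos i j h
      have hcr : 0 < c j * r i := mul_pos (hc j) (hr i)
      have e1 : S i j / L' i j = (S i j / L i j) * (c j * r i) := by
        rw [hL']; field_simp
      rw [e1, Real.log_mul (by positivity) hcr.ne', Real.log_mul (hc j).ne' (hr i).ne']
      ring
  unfold KL
  have e0 : ∑ i, ∑ j, S i j * Real.log (S i j / L' i j)
      = ∑ i, ∑ j, (S i j * Real.log (S i j / L i j) + S i j * Real.log (c j)
          + S i j * Real.log (r i)) :=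
    Finset.sum_congr rfl fun i _ => Finset.sum_congr rfl fun j _ => key i j
  rw [e0]
  have e2 : ∑ i, ∑ j, S i j * Real.log (c j) = ∑ j, Real.log (c j) := by
    rw [Finset.sum_comm]
    refine Finset.sum_congr rfl fun j _ => ?_
    rw [← Finset.sum_mul, hScol, one_mul]
  have e3 : ∑ i, ∑ j, S i j * Real.log (r i) = ∑ i, Real.log (r i) := by
    refine Finset.sum_congr rfl fun i _ => ?_
    rw [← Finset.sum_mul, hSrow, one_mul]
  simp only [Finset.sum_add_distrib]
  rw [e2, e3]

/-- sign pattern of a matrix matches that of `M`. -/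
def Patt {n : ℕ} (M A : Fin n → Fin n → ℝ) : Prop :=
  (∀ i j, 0 ≤ A i j) ∧ (∀ i j, 0 < M i j → 0 < A i j) ∧ (∀ i j, M i j = 0 → A i j = 0)

variable {n : ℕ} {M : Fin n → Fin n → ℝ} {σ : Equiv.Perm (Fin n)}

lemma rowNorm_patt {A : Fin n → Fin n → ℝ} (hσ : ∀ i, 0 < M i (σ i)) (hA : Patt M A) :
    Patt M (rowNorm A) ∧ (∀ i, ∑ j, rowNorm A i j = 1) := by
  obtain ⟨h0, hp, hz⟩ := hA
  have hs : ∀ i, 0 < ∑ k, A i k := fun i =>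
    lt_of_lt_of_le (hp i (σ i) (hσ i))
      (Finset.single_le_sum (fun j _ => h0 i j) (Finset.mem_univ (σ i)))
  refine ⟨⟨fun i j => div_nonneg (h0 i j) (hs i).le,
      fun i j h => div_pos (hp i j h) (hs i),
      fun i j h => by simp [rowNorm, hz i j h]⟩, fun i => ?_⟩
  rw [show ∑ j, rowNorm A i j = (∑ j, A i j) / (∑ k, A i k) from (Finset.sum_div _ _ _).symm]
  exact div_self (hs i).ne'

lemma colNorm_patt {A : Fin n → Fin n → ℝ} (hσ : ∀ i, 0 < M i (σ i)) (hA : Patt M A) :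
    Patt M (colNorm A) ∧ (∀ j, ∑ i, colNorm A i j = 1) := by
  obtain ⟨h0, hp, hz⟩ := hA
  have hs : ∀ j, 0 < ∑ k, A k j := by
    intro j
    have hMj : 0 < M (σ.symm j) j := by
      have := hσ (σ.symm j); rwa [Equiv.apply_symm_apply] at this
    exact lt_of_lt_of_le (hp _ j hMj)
      (Finset.single_le_sum (fun i _ => h0 i j) (Finset.mem_univ (σ.symm j)))
  refine ⟨⟨fun i j => div_nonneg (h0 i j) (hs j).le,
      fun i j h => div_pos (hp i j h) (hs j),
      fun i j h => by simp [colNorm, hz i j h]⟩, fun j => ?_⟩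
  rw [show ∑ i, colNorm A i j = (∑ i, A i j) / (∑ k, A k j) from (Finset.sum_div _ _ _).symm]
  exact div_self (hs j).ne'

lemma sinkhornL_patt (hMnn : ∀ i j, 0 ≤ M i j) (hσ : ∀ i, 0 < M i (σ i)) (k : ℕ) :
    Patt M (sinkhornL M k) ∧ (∀ i, ∑ j, sinkhornL M k i j = 1) := by
  induction k with
  | zero => exact rowNorm_patt hσ ⟨hMnn, fun _ _ h => h, fun _ _ h => h⟩
  | succ k ih => exact rowNorm_patt hσ (colNorm_patt hσ ih.1).1

lemma tendsto_of_sq_sub {f : ℕ → ℝ} {a : ℝ}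
    (h : Tendsto (fun k => (f k - a) ^ 2) atTop (nhds 0)) :
    Tendsto f atTop (nhds a) := by
  have h1 : Tendsto (fun k => |f k - a|) atTop (nhds 0) := by
    have h2 := (Real.continuous_sqrt.tendsto 0).comp h
    simpa [Function.comp_def, Real.sqrt_sq_eq_abs, Real.sqrt_zero] using h2
  have h3 : Tendsto (fun k => f k - a) atTop (nhds 0) :=
    (tendsto_zero_iff_abs_tendsto_zero _).2 (by simpa [Function.comp_def] using h1)
  simpa using h3.add (tendsto_const_nhds (x := a))

lemma tendsto_of_sqrt {f : ℕ → ℝ} {a : ℝ} (hf : ∀ k, 0 ≤ f k) (ha : 0 ≤ a)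
    (h : Tendsto (fun k => (Real.sqrt (f k) - Real.sqrt a) ^ 2) atTop (nhds 0)) :
    Tendsto f atTop (nhds a) := by
  have h1 : Tendsto (fun k => Real.sqrt (f k)) atTop (nhds (Real.sqrt a)) := tendsto_of_sq_sub h
  have h2 := h1.mul h1
  have h3 : Tendsto f atTop (nhds (Real.sqrt a * Real.sqrt a)) :=
    h2.congr fun k => Real.mul_self_sqrt (hf k)
  simpa [Real.mul_self_sqrt ha] using h3

end Sinkhorn6

/-- Sinkhorn's theorem: if the nonnegative square matrix `M` has a
positive diagonal, then both sequences of Sinkhorn iterates converge entrywise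
to a common doubly stochastic matrix `S`. -/
theorem sinkhorn_converges (n : ℕ) (hn : 0 < n) (M : Fin n → Fin n → ℝ)
    (hMnn : ∀ i j, 0 ≤ M i j)
    (hdiag : ∃ σ : Equiv.Perm (Fin n), ∀ i, 0 < M i (σ i)) :
    ∃ S : Fin n → Fin n → ℝ,
      (∀ i j, 0 ≤ S i j) ∧ (∀ i, (∑ j, S i j) = 1) ∧ (∀ j, (∑ i, S i j) = 1) ∧
      (∀ i j, Filter.Tendsto (fun k => sinkhornL M k i j) Filter.atTop (nhds (S i j))) ∧
      (∀ i j, Filter.Tendsto (fun k => sinkhornT M k i j) Filter.atTop (nhds (S i j))) := by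
  classical
  open Real Filter Sinkhorn6 in
  obtain ⟨σ, hσ⟩ := hdiag
  -- basic invariants
  have hL0 : ∀ k i j, 0 ≤ sinkhornL M k i j := fun k => (sinkhornL_patt hMnn hσ k).1.1
  have hLpos : ∀ k i j, 0 < M i j → 0 < sinkhornL M k i j :=
    fun k => (sinkhornL_patt hMnn hσ k).1.2.1
  have hLz : ∀ k i j, M i j = 0 → sinkhornL M k i j = 0 :=
    fun k => (sinkhornL_patt hMnn hσ k).1.2.2
  have hLrow : ∀ k i, ∑ j, sinkhornL M k i j = 1 := fun k => (sinkhornL_patt hMnn hσ k).2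
  -- column sums of L and row sums of T
  set c : ℕ → Fin n → ℝ := fun k j => ∑ i, sinkhornL M k i j with hc_def
  set r : ℕ → Fin n → ℝ := fun k i => ∑ j, sinkhornT M k i j with hr_def
  have hc : ∀ k j, 0 < c k j := by
    intro k j
    have hMj : 0 < M (σ.symm j) j := by
      have := hσ (σ.symm j); rwa [Equiv.apply_symm_apply] at this
    exact lt_of_lt_of_le (hLpos k _ j hMj)
      (Finset.single_le_sum (fun i _ => hL0 k i j) (Finset.mem_univ (σ.symm j)))
  have hTeq : ∀ k i j, sinkhornT M k i j = sinkhornL M k i j / c k j := fun k i j => rfl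
  have hT0 : ∀ k i j, 0 ≤ sinkhornT M k i j := fun k i j =>
    div_nonneg (hL0 k i j) (hc k j).le
  have hTpos : ∀ k i j, 0 < M i j → 0 < sinkhornT M k i j := fun k i j h =>
    div_pos (hLpos k i j h) (hc k j)
  have hTcol : ∀ k j, ∑ i, sinkhornT M k i j = 1 :=
    fun k => (colNorm_patt hσ (sinkhornL_patt hMnn hσ k).1).2
  have hr : ∀ k i, 0 < r k i := fun k i =>
    lt_of_lt_of_le (hTpos k i (σ i) (hσ i))
      (Finset.single_le_sum (fun j _ => hT0 k i j) (Finset.mem_univ (σ i)))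
  have hLsucc : ∀ k i j, sinkhornL M (k + 1) i j = sinkhornL M k i j / (c k j * r k i) := by
    intro k i j
    show colNorm (sinkhornL M k) i j / (∑ j', colNorm (sinkhornL M k) i j') = _
    rw [show (∑ j', colNorm (sinkhornL M k) i j') = r k i from rfl]
    rw [show colNorm (sinkhornL M k) i j = sinkhornL M k i j / c k j from rfl]
    rw [div_div]
  -- masses
  have hmassL : ∀ k, ∑ i, ∑ j, sinkhornL M k i j = (n : ℝ) := by
    intro k
    simp [hLrow k]
  have hsum_c : ∀ k, ∑ j, c k j = (n : ℝ) := by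
    intro k
    rw [hc_def]
    rw [Finset.sum_comm]
    simp [hLrow k]
  have hsum_r : ∀ k, ∑ i, r k i = (n : ℝ) := by
    intro k
    rw [hr_def]
    rw [Finset.sum_comm]
    simp [hTcol k]
  -- the permutation matrix
  set P : Fin n → Fin n → ℝ := fun i j => if σ i = j then 1 else 0 with hP_def
  have hP0 : ∀ i j, 0 ≤ P i j := by intro i j; dsimp [P]; split <;> norm_num
  have hProw : ∀ i, ∑ j, P i j = 1 := by intro i; simp [hP_def]
  have hPcol : ∀ j, ∑ i, P i j = 1 := by
    intro j
    rw [hP_def]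
    rw [show (∑ i, if σ i = j then (1:ℝ) else 0) = ∑ i, if i = σ.symm j then (1:ℝ) else 0 from
      Finset.sum_congr rfl fun i _ => by
        congr 1
        simp [Equiv.apply_eq_iff_eq_symm_apply]]
    simp
  have hPz : ∀ i j, M i j = 0 → P i j = 0 := by
    intro i j h
    dsimp [P]
    split
    · next he => exact absurd h (by rw [← he]; exact (hσ i).ne')
    · rfl
  have hmassP : ∑ i, ∑ j, P i j = (n : ℝ) := by simp [hProw]
  -- step identity and monotonicity
  set E : ℕ → ℝ := fun k => (∑ j, Real.log (c k j)) + (∑ i, Real.log (r k i)) with hE_def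
  have hstep : ∀ (S : Fin n → Fin n → ℝ), (∀ i j, 0 ≤ S i j) →
      (∀ i, ∑ j, S i j = 1) → (∀ j, ∑ i, S i j = 1) → (∀ i j, M i j = 0 → S i j = 0) →
      ∀ k, KL S (sinkhornL M (k + 1)) = KL S (sinkhornL M k) + E k := by
    intro S hS0 hSrow hScol hSz k
    have := KL_step (L := sinkhornL M k) (L' := sinkhornL M (k + 1))
      (c := c k) (r := r k) hS0 hSrow hScol (hc k) (hr k) (hLsucc k)
      (fun i j h => by
        rcases eq_or_lt_of_le (hMnn i j) with hM | hM
        · exact absurd (hSz i j hM.symm) h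
        · exact hLpos k i j hM)
    rw [this, hE_def]; ring
  have hlogc_le : ∀ k, ∑ j, Real.log (c k j) ≤ 0 := by
    intro k
    have h1 : ∑ j, Real.log (c k j) ≤ ∑ j, (c k j - 1) :=
      Finset.sum_le_sum fun j _ => Real.log_le_sub_one_of_pos (hc k j)
    have h2 : ∑ j, (c k j - 1) = 0 := by
      rw [Finset.sum_sub_distrib, hsum_c]; simp
    linarith
  have hlogr_le : ∀ k, ∑ i, Real.log (r k i) ≤ 0 := by
    intro k
    have h1 : ∑ i, Real.log (r k i) ≤ ∑ i, (r k i - 1) :=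
      Finset.sum_le_sum fun i _ => Real.log_le_sub_one_of_pos (hr k i)
    have h2 : ∑ i, (r k i - 1) = 0 := by
      rw [Finset.sum_sub_distrib, hsum_r]; simp
    linarith
  have hE_le : ∀ k, E k ≤ 0 := fun k => by
    have := hlogc_le k; have := hlogr_le k; rw [hE_def]; dsimp; linarith
  -- convergence of KL P (L k), hence E k → 0
  set a : ℕ → ℝ := fun k => KL P (sinkhornL M k) with ha_def
  have ha_succ : ∀ k, a (k + 1) = a k + E k := fun k =>
    hstep P hP0 hProw hPcol hPz k
  have ha_anti : Antitone a := antitone_nat_of_succ_le fun k => by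
    rw [ha_succ k]; linarith [hE_le k]
  have ha_nonneg : ∀ k, 0 ≤ a k := by
    intro k
    apply KL_nonneg hP0 (hL0 k)
    · intro i j h
      have : P i j ≠ 0 := h.ne'
      have hM : 0 < M i j := by
        rcases eq_or_lt_of_le (hMnn i j) with hM | hM
        · exact absurd (hPz i j hM.symm) this
        · exact hM
      exact hLpos k i j hM
    · rw [hmassP, hmassL]
  have ha_conv : Tendsto a atTop (nhds (⨅ k, a k)) :=
    tendsto_atTop_ciInf ha_anti ⟨0, by rintro x ⟨k, rfl⟩; exact ha_nonneg k⟩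
  have hEtend : Tendsto E atTop (nhds 0) := by
    have h1 : Tendsto (fun k => a (k + 1)) atTop (nhds (⨅ k, a k)) :=
      ha_conv.comp (tendsto_add_atTop_nat 1)
    have h2 := h1.sub ha_conv
    rw [sub_self] at h2
    exact h2.congr fun k => by rw [ha_succ k]; ring
  -- each column sum of L tends to 1
  have hlogc_tend : Tendsto (fun k => ∑ j, Real.log (c k j)) atTop (nhds 0) := by
    have h1 : Tendsto (fun k => -(∑ j, Real.log (c k j))) atTop (nhds 0) := by
      apply squeeze_zero (fun k => by linarith [hlogc_le k]) (fun k => ?_) (by simpa using hEtend.neg)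
      have := hlogr_le k
      rw [hE_def]; dsimp; linarith
    have := h1.neg
    simpa using this
  have hlogr_tend : Tendsto (fun k => ∑ i, Real.log (r k i)) atTop (nhds 0) := by
    have h1 : Tendsto (fun k => -(∑ i, Real.log (r k i))) atTop (nhds 0) := by
      apply squeeze_zero (fun k => by linarith [hlogr_le k]) (fun k => ?_) (by simpa using hEtend.neg)
      have := hlogc_le k
      rw [hE_def]; dsimp; linarith
    have := h1.neg
    simpa using this
  have hGc : ∀ j, Tendsto (fun k => c k j - 1 - Real.log (c k j)) atTop (nhds 0) := by
    intro j
    apply squeeze_zero (g := fun k => -(∑ j', Real.log (c k j')))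
    · intro k; have := Real.log_le_sub_one_of_pos (hc k j); linarith
    · intro k
      have h1 : ∑ j', (c k j' - 1 - Real.log (c k j')) = -(∑ j', Real.log (c k j')) := by
        rw [Finset.sum_sub_distrib, Finset.sum_sub_distrib, hsum_c]
        simp
      have hnn : ∀ j' : Fin n, 0 ≤ c k j' - 1 - Real.log (c k j') := fun j' => by
        have := Real.log_le_sub_one_of_pos (hc k j'); linarith
      have h2 : c k j - 1 - Real.log (c k j) ≤ ∑ j', (c k j' - 1 - Real.log (c k j')) :=
        Finset.single_le_sum (f := fun j' => c k j' - 1 - Real.log (c k j'))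
          (fun j' _ => hnn j') (Finset.mem_univ j)
      linarith
    · simpa using hlogc_tend.neg
  have hGr : ∀ i, Tendsto (fun k => r k i - 1 - Real.log (r k i)) atTop (nhds 0) := by
    intro i
    apply squeeze_zero (g := fun k => -(∑ i', Real.log (r k i')))
    · intro k; have := Real.log_le_sub_one_of_pos (hr k i); linarith
    · intro k
      have hnn : ∀ i' : Fin n, 0 ≤ r k i' - 1 - Real.log (r k i') := fun i' => by
        have := Real.log_le_sub_one_of_pos (hr k i'); linarith
      have h2 : r k i - 1 - Real.log (r k i) ≤ ∑ i', (r k i' - 1 - Real.log (r k i')) :=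
        Finset.single_le_sum (f := fun i' => r k i' - 1 - Real.log (r k i'))
          (fun i' _ => hnn i') (Finset.mem_univ i)
      have h1 : ∑ i', (r k i' - 1 - Real.log (r k i')) = -(∑ i', Real.log (r k i')) := by
        rw [Finset.sum_sub_distrib, Finset.sum_sub_distrib, hsum_r]
        simp
      linarith
    · simpa using hlogr_tend.neg
  have hcten : ∀ j, Tendsto (fun k => c k j) atTop (nhds 1) := by
    intro j
    apply tendsto_of_sqrt (fun k => (hc k j).le) zero_le_one
    apply squeeze_zero (fun k => sq_nonneg _) (fun k => ?_) (hGc j)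
    rw [Real.sqrt_one]
    exact log_quad (hc k j)
  have hrten : ∀ i, Tendsto (fun k => r k i) atTop (nhds 1) := by
    intro i
    apply tendsto_of_sqrt (fun k => (hr k i).le) zero_le_one
    apply squeeze_zero (fun k => sq_nonneg _) (fun k => ?_) (hGr i)
    rw [Real.sqrt_one]
    exact log_quad (hr k i)
  -- compactness: a doubly stochastic limit point Λ
  have hL_le_one : ∀ k i j, sinkhornL M k i j ≤ 1 := by
    intro k i j
    calc sinkhornL M k i j ≤ ∑ j', sinkhornL M k i j' :=
          Finset.single_le_sum (fun j' _ => hL0 k i j') (Finset.mem_univ j)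
      _ = 1 := hLrow k i
  obtain ⟨Λ, hΛs, φ, hφ, hΛtend⟩ :=
    (isCompact_univ_pi fun _ : Fin n => isCompact_univ_pi fun _ : Fin n =>
        isCompact_Icc (a := (0:ℝ)) (b := 1)).tendsto_subseq
      (x := fun k => sinkhornL M k)
      (fun k => Set.mem_univ_pi.2 fun i => Set.mem_univ_pi.2 fun j =>
        Set.mem_Icc.2 ⟨hL0 k i j, hL_le_one k i j⟩)
  have hE2 : ∀ i j, Tendsto (fun m => sinkhornL M (φ m) i j) atTop (nhds (Λ i j)) := by
    intro i j
    have h1 := tendsto_pi_nhds.1 hΛtend i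
    have h2 := tendsto_pi_nhds.1 h1 j
    simpa [Function.comp] using h2
  have hΛ0 : ∀ i j, 0 ≤ Λ i j := fun i j =>
    le_of_tendsto_of_tendsto' tendsto_const_nhds (hE2 i j) (fun m => hL0 (φ m) i j)
  have hΛz : ∀ i j, M i j = 0 → Λ i j = 0 := by
    intro i j h
    have h1 : Tendsto (fun m => sinkhornL M (φ m) i j) atTop (nhds 0) :=
      tendsto_const_nhds.congr fun m => (hLz (φ m) i j h).symm
    exact tendsto_nhds_unique (hE2 i j) h1
  have hΛrow : ∀ i, ∑ j, Λ i j = 1 := by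
    intro i
    have h1 : Tendsto (fun m => ∑ j, sinkhornL M (φ m) i j) atTop (nhds (∑ j, Λ i j)) :=
      tendsto_finset_sum _ fun j _ => hE2 i j
    have h2 : Tendsto (fun m => ∑ j, sinkhornL M (φ m) i j) atTop (nhds 1) :=
      tendsto_const_nhds.congr fun m => (hLrow (φ m) i).symm
    exact tendsto_nhds_unique h1 h2
  have hΛcol : ∀ j, ∑ i, Λ i j = 1 := by
    intro j
    have h1 : Tendsto (fun m => ∑ i, sinkhornL M (φ m) i j) atTop (nhds (∑ i, Λ i j)) :=
      tendsto_finset_sum _ fun i _ => hE2 i j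
    have h2 : Tendsto (fun m => c (φ m) j) atTop (nhds 1) :=
      (hcten j).comp hφ.tendsto_atTop
    exact tendsto_nhds_unique h1 h2
  have hΛpos : ∀ i j, Λ i j ≠ 0 → 0 < M i j := by
    intro i j h
    rcases eq_or_lt_of_le (hMnn i j) with hM | hM
    · exact absurd (hΛz i j hM.symm) h
    · exact hM
  -- KL Λ (L k) is antitone and tends to 0 along φ, hence everywhere
  set b : ℕ → ℝ := fun k => KL Λ (sinkhornL M k) with hb_def
  have hb_succ : ∀ k, b (k + 1) = b k + E k := fun k =>
    hstep Λ hΛ0 hΛrow hΛcol hΛz k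
  have hb_anti : Antitone b := antitone_nat_of_succ_le fun k => by
    rw [hb_succ k]; linarith [hE_le k]
  have hb_nonneg : ∀ k, 0 ≤ b k := by
    intro k
    apply KL_nonneg hΛ0 (hL0 k)
    · exact fun i j h => hLpos k i j (hΛpos i j h.ne')
    · rw [hmassL]
      rw [show ∑ i, ∑ j, Λ i j = (n : ℝ) by simp [hΛrow]]
  have hb_conv : Tendsto b atTop (nhds (⨅ k, b k)) :=
    tendsto_atTop_ciInf hb_anti ⟨0, by rintro x ⟨k, rfl⟩; exact hb_nonneg k⟩
  have hbφ : Tendsto (fun m => b (φ m)) atTop (nhds 0) := by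
    have hterm : ∀ i j, Tendsto
        (fun m => Λ i j * Real.log (Λ i j / sinkhornL M (φ m) i j)) atTop (nhds 0) := by
      intro i j
      rcases eq_or_lt_of_le (hΛ0 i j) with h | h
      · exact tendsto_const_nhds.congr fun m => by rw [← h]; ring
      · have hdiv : Tendsto (fun m => Λ i j / sinkhornL M (φ m) i j) atTop (nhds 1) := by
          have := (tendsto_const_nhds (x := Λ i j)).div (hE2 i j) h.ne'
          simpa [div_self h.ne', Pi.div_def] using this
        have hlog : Tendsto (fun m => Real.log (Λ i j / sinkhornL M (φ m) i j)) atTop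
            (nhds 0) := by
          have := (Real.continuousAt_log one_ne_zero).tendsto.comp hdiv
          simpa [Function.comp_def] using this
        have := hlog.const_mul (Λ i j)
        simpa using this
    have h1 : Tendsto (fun m => ∑ i, ∑ j, Λ i j * Real.log (Λ i j / sinkhornL M (φ m) i j))
        atTop (nhds (∑ i : Fin n, ∑ j : Fin n, (0:ℝ))) :=
      tendsto_finset_sum _ fun i _ => tendsto_finset_sum _ fun j _ => hterm i j
    simpa [hb_def, KL] using h1
  have hinf0 : (⨅ k, b k) = 0 :=
    tendsto_nhds_unique (hb_conv.comp hφ.tendsto_atTop) hbφ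
  have hb0 : Tendsto b atTop (nhds 0) := hinf0 ▸ hb_conv
  -- pointwise convergence of L to Λ
  have hψ0 : ∀ k i j, 0 ≤ Λ i j * Real.log (Λ i j / sinkhornL M k i j)
      - Λ i j + sinkhornL M k i j := by
    intro k i j
    have := term_ge (hΛ0 i j) (hL0 k i j) (fun h => hLpos k i j (hΛpos i j h.ne'))
    linarith
  have hψsum : ∀ k, ∑ i, ∑ j, (Λ i j * Real.log (Λ i j / sinkhornL M k i j)
      - Λ i j + sinkhornL M k i j) = b k := by
    intro k
    have : ∑ i, ∑ j, (Λ i j * Real.log (Λ i j / sinkhornL M k i j)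
        - Λ i j + sinkhornL M k i j)
        = (∑ i, ∑ j, Λ i j * Real.log (Λ i j / sinkhornL M k i j))
          - (∑ i, ∑ j, Λ i j) + (∑ i, ∑ j, sinkhornL M k i j) := by
      simp [Finset.sum_add_distrib, Finset.sum_sub_distrib]
    rw [this, hmassL, show ∑ i, ∑ j, Λ i j = (n : ℝ) by simp [hΛrow]]
    simp [hb_def, KL]
  have hψtend : ∀ i j, Tendsto (fun k => Λ i j * Real.log (Λ i j / sinkhornL M k i j)
      - Λ i j + sinkhornL M k i j) atTop (nhds 0) := by
    intro i j
    apply squeeze_zero (fun k => hψ0 k i j) (fun k => ?_) hb0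
    rw [← hψsum k]
    calc Λ i j * Real.log (Λ i j / sinkhornL M k i j) - Λ i j + sinkhornL M k i j
        ≤ ∑ j', (Λ i j' * Real.log (Λ i j' / sinkhornL M k i j')
            - Λ i j' + sinkhornL M k i j') :=
          Finset.single_le_sum (fun j' _ => hψ0 k i j') (Finset.mem_univ j)
      _ ≤ _ := Finset.single_le_sum (fun i' _ => Finset.sum_nonneg fun j' _ => hψ0 k i' j')
          (Finset.mem_univ i)
  have hLtend : ∀ i j, Tendsto (fun k => sinkhornL M k i j) atTop (nhds (Λ i j)) := by
    intro i j
    rcases eq_or_lt_of_le (hΛ0 i j) with h | h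
    · rw [← h]
      exact (hψtend i j).congr fun k => by rw [← h]; ring
    · have hM : 0 < M i j := hΛpos i j h.ne'
      have hLp : ∀ k, 0 < sinkhornL M k i j := fun k => hLpos k i j hM
      apply tendsto_of_sqrt (fun k => (hLp k).le) (hΛ0 i j)
      apply squeeze_zero (fun k => sq_nonneg _) (fun k => ?_) (hψtend i j)
      -- (√L - √Λ)² ≤ Λ log(Λ/L) - Λ + L
      set Lk := sinkhornL M k i j with hLk_def
      have hLkpos : 0 < Lk := hLp k
      have hΛpos' : 0 < Λ i j := h
      have q := log_quad (div_pos hLkpos hΛpos')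
      have e1 : Λ i j * Real.sqrt (Lk / Λ i j) ^ 2 = Lk := by
        rw [Real.sq_sqrt (by positivity)]
        field_simp
      have e2 : Real.sqrt (Lk / Λ i j) * Real.sqrt (Λ i j) = Real.sqrt Lk := by
        rw [Real.sqrt_div hLkpos.le]
        field_simp [Real.sqrt_ne_zero'.2 hΛpos']
      have e3 : Real.sqrt (Λ i j) ^ 2 = Λ i j := Real.sq_sqrt hΛpos'.le
      have e4 : Real.sqrt Lk ^ 2 = Lk := Real.sq_sqrt hLkpos.le
      have e5 : Λ i j * Real.sqrt (Lk / Λ i j) = Real.sqrt (Λ i j) * Real.sqrt Lk := by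
        rw [← e2]
        linear_combination (-Real.sqrt (Lk / Λ i j)) * e3
      have e6 : Λ i j * (Lk / Λ i j) = Lk := by field_simp
      have hlog : Real.log (Λ i j / Lk) = - Real.log (Lk / Λ i j) := by
        rw [← Real.log_inv, inv_div]
      nlinarith [mul_le_mul_of_nonneg_left q hΛpos'.le, e1, e3, e4, e5, e6, hlog]
  have hTtend : ∀ i j, Tendsto (fun k => sinkhornT M k i j) atTop (nhds (Λ i j)) := by
    intro i j
    have h1 := (hLtend i j).div (hcten j) one_ne_zero
    simpa [hTeq, Pi.div_def] using h1
  exact ⟨Λ, hΛ0, hΛrow, hΛcol, hLtend, hTtend⟩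
end

section
/- Let n be a positive integer and M : Fin n → Fin n → ℝ a nonnegative matrix with at least one positive diagonal, and suppose the Sinkhorn iterates of M converge entrywise to a doubly stochastic matrix S. Then for every permutation σ of Fin n that is a positive diagonal of M (i.e., M i (σ i) > 0 for all i), the limit satisfies S i (σ i) > 0 for all i; that is, entries of M lying on a positive diagonal do not tend to zero under the iteration. -/
open Finset

/-- AM-GM: nonnegative reals summing to `n` have product at most `1`. -/
lemma amgm_prod_le_one {n : ℕ} (hn : 0 < n) (x : Fin n → ℝ) (hx : ∀ j, 0 ≤ x j)
    (hs : ∑ j, x j = n) : ∏ j, x j ≤ 1 := by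
  have h := Real.geom_mean_le_arith_mean Finset.univ (fun _ => (1 : ℝ)) x
    (fun _ _ => zero_le_one) (by simp [hn, Nat.cast_pos]) (fun j _ => hx j)
  simp only [Real.rpow_one, one_mul, Finset.sum_const, Finset.card_univ, Fintype.card_fin,
    nsmul_eq_mul, mul_one, hs] at h
  rw [div_self (by positivity : (n : ℝ) ≠ 0)] at h
  have hp : (0 : ℝ) ≤ ∏ j, x j := Finset.prod_nonneg fun j _ => hx j
  calc ∏ j, x j = ((∏ j, x j) ^ ((n : ℝ))⁻¹) ^ n :=
        (Real.rpow_inv_natCast_pow hp hn.ne').symm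
    _ ≤ 1 ^ n := pow_le_pow_left₀ (Real.rpow_nonneg hp _) h n
    _ = 1 := one_pow n

lemma rowNorm_rowsum {n : ℕ} (A : Fin n → Fin n → ℝ) (i : Fin n) (h : (∑ k, A i k) ≠ 0) :
    ∑ j, rowNorm A i j = 1 := by
  simp [rowNorm, ← Finset.sum_div, div_self h]

lemma colNorm_colsum {n : ℕ} (A : Fin n → Fin n → ℝ) (j : Fin n) (h : (∑ k, A k j) ≠ 0) :
    ∑ i, colNorm A i j = 1 := by
  simp [colNorm, ← Finset.sum_div, div_self h]

/-- entries of `M` lying on a positive diagonal do not tend to zero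
under the Sinkhorn iteration: the doubly stochastic limit `S` is positive on
every positive diagonal of `M`. -/
theorem sinkhorn_limit_pos_on_positive_diagonal (n : ℕ) (hn : 0 < n)
    (M : Fin n → Fin n → ℝ)
    (hMnn : ∀ i j, 0 ≤ M i j)
    (hdiag : ∃ σ : Equiv.Perm (Fin n), ∀ i, 0 < M i (σ i))
    (S : Fin n → Fin n → ℝ)
    (hSnn : ∀ i j, 0 ≤ S i j)
    (hSrow : ∀ i, (∑ j, S i j) = 1) (hScol : ∀ j, (∑ i, S i j) = 1)
    (hconvL : ∀ i j, Filter.Tendsto (fun k => sinkhornL M k i j) Filter.atTop (nhds (S i j)))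
    (hconvT : ∀ i j, Filter.Tendsto (fun k => sinkhornT M k i j) Filter.atTop (nhds (S i j))) :
    ∀ σ : Equiv.Perm (Fin n), (∀ i, 0 < M i (σ i)) → ∀ i, 0 < S i (σ i) := by
  intro σ hσ
  classical
  -- invariant: all Sinkhorn iterates are nonnegative and positive on the diagonal of σ
  have key : ∀ k, (∀ i j, 0 ≤ sinkhornL M k i j) ∧ (∀ i, 0 < sinkhornL M k i (σ i)) := by
    intro k
    induction k with
    | zero =>
      have hrs : ∀ i, 0 < ∑ j, M i j := fun i =>
        Finset.sum_pos' (fun j _ => hMnn i j) ⟨σ i, Finset.mem_univ _, hσ i⟩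
      exact ⟨fun i j => div_nonneg (hMnn i j) (hrs i).le, fun i => div_pos (hσ i) (hrs i)⟩
    | succ k ih =>
      obtain ⟨hnn, hd⟩ := ih
      have hcs : ∀ j, 0 < ∑ i, sinkhornL M k i j := by
        intro j
        refine Finset.sum_pos' (fun i _ => hnn i j) ⟨σ.symm j, Finset.mem_univ _, ?_⟩
        simpa using hd (σ.symm j)
      have hTnn : ∀ i j, 0 ≤ colNorm (sinkhornL M k) i j :=
        fun i j => div_nonneg (hnn i j) (hcs j).le
      have hTd : ∀ i, 0 < colNorm (sinkhornL M k) i (σ i) :=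
        fun i => div_pos (hd i) (hcs (σ i))
      have hrs : ∀ i, 0 < ∑ j, colNorm (sinkhornL M k) i j := fun i =>
        Finset.sum_pos' (fun j _ => hTnn i j) ⟨σ i, Finset.mem_univ _, hTd i⟩
      exact ⟨fun i j => div_nonneg (hTnn i j) (hrs i).le, fun i => div_pos (hTd i) (hrs i)⟩
  -- row sums of all iterates are 1
  have rowsum1 : ∀ k i, ∑ j, sinkhornL M k i j = 1 := by
    intro k i
    cases k with
    | zero =>
      have hrs : 0 < ∑ j, M i j :=
        Finset.sum_pos' (fun j _ => hMnn i j) ⟨σ i, Finset.mem_univ _, hσ i⟩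
      exact rowNorm_rowsum M i hrs.ne'
    | succ k =>
      obtain ⟨hnn, hd⟩ := key k
      have hcs : ∀ j, 0 < ∑ i', sinkhornL M k i' j := by
        intro j
        refine Finset.sum_pos' (fun i' _ => hnn i' j) ⟨σ.symm j, Finset.mem_univ _, ?_⟩
        simpa using hd (σ.symm j)
      have hTnn : ∀ i' j, 0 ≤ colNorm (sinkhornL M k) i' j :=
        fun i' j => div_nonneg (hnn i' j) (hcs j).le
      have hTd : ∀ i', 0 < colNorm (sinkhornL M k) i' (σ i') :=
        fun i' => div_pos (hd i') (hcs (σ i'))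
      have hrs : 0 < ∑ j, colNorm (sinkhornL M k) i j :=
        Finset.sum_pos' (fun j _ => hTnn i j) ⟨σ i, Finset.mem_univ _, hTd i⟩
      exact rowNorm_rowsum (colNorm (sinkhornL M k)) i hrs.ne'
  -- the diagonal product is monotone nondecreasing
  have pmono : ∀ k, ∏ i, sinkhornL M k i (σ i) ≤ ∏ i, sinkhornL M (k + 1) i (σ i) := by
    intro k
    obtain ⟨hnn, hd⟩ := key k
    have hcs : ∀ j, 0 < ∑ i, sinkhornL M k i j := by
      intro j
      refine Finset.sum_pos' (fun i _ => hnn i j) ⟨σ.symm j, Finset.mem_univ _, ?_⟩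
      simpa using hd (σ.symm j)
    set T := colNorm (sinkhornL M k) with hT
    have hTnn : ∀ i j, 0 ≤ T i j := fun i j => div_nonneg (hnn i j) (hcs j).le
    have hTd : ∀ i, 0 < T i (σ i) := fun i => div_pos (hd i) (hcs (σ i))
    have hrs : ∀ i, 0 < ∑ j, T i j := fun i =>
      Finset.sum_pos' (fun j _ => hTnn i j) ⟨σ i, Finset.mem_univ _, hTd i⟩
    -- sum of column sums of L is n
    have hcsum : ∑ j, ∑ i, sinkhornL M k i j = n := by
      rw [Finset.sum_comm]
      simp [rowsum1 k]
    have hC : ∏ j, (∑ i, sinkhornL M k i j) ≤ 1 :=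
      amgm_prod_le_one hn _ (fun j => (hcs j).le) hcsum
    have hCpos : 0 < ∏ j, ∑ i, sinkhornL M k i j := Finset.prod_pos fun j _ => hcs j
    -- sum of row sums of T is n
    have hT1 : ∀ j, ∑ i, T i j = 1 := fun j => colNorm_colsum _ j (hcs j).ne'
    have hrsum : ∑ i, ∑ j, T i j = n := by
      rw [Finset.sum_comm]
      simp [hT1]
    have hR : ∏ i, (∑ j, T i j) ≤ 1 := amgm_prod_le_one hn _ (fun i => (hrs i).le) hrsum
    have hRpos : 0 < ∏ i, ∑ j, T i j := Finset.prod_pos fun i _ => hrs i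
    have hTprod : ∏ i, T i (σ i)
        = (∏ i, sinkhornL M k i (σ i)) / ∏ j, ∑ i', sinkhornL M k i' j := by
      calc ∏ i, T i (σ i)
          = ∏ i, (sinkhornL M k i (σ i) / ∑ i', sinkhornL M k i' (σ i)) := rfl
        _ = (∏ i, sinkhornL M k i (σ i)) / ∏ i, ∑ i', sinkhornL M k i' (σ i) :=
            Finset.prod_div_distrib _ _
        _ = _ := by rw [Equiv.prod_comp σ (fun j => ∑ i', sinkhornL M k i' j)]
    have hLprod : ∏ i, sinkhornL M (k + 1) i (σ i)
        = (∏ i, T i (σ i)) / ∏ i, ∑ j, T i j := by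
      calc ∏ i, sinkhornL M (k + 1) i (σ i)
          = ∏ i, (T i (σ i) / ∑ j, T i j) := rfl
        _ = _ := Finset.prod_div_distrib _ _
    have ppos : 0 < ∏ i, sinkhornL M k i (σ i) := Finset.prod_pos fun i _ => hd i
    rw [hLprod, hTprod, div_div]
    rw [le_div_iff₀ (mul_pos hCpos hRpos)]
    calc (∏ i, sinkhornL M k i (σ i)) * ((∏ j, ∑ i', sinkhornL M k i' j) * ∏ i, ∑ j, T i j)
        ≤ (∏ i, sinkhornL M k i (σ i)) * 1 := by
          apply mul_le_mul_of_nonneg_left _ ppos.le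
          exact mul_le_one₀ hC hRpos.le hR
      _ = ∏ i, sinkhornL M k i (σ i) := mul_one _
  have pge : ∀ k, ∏ i, sinkhornL M 0 i (σ i) ≤ ∏ i, sinkhornL M k i (σ i) := by
    intro k
    induction k with
    | zero => exact le_rfl
    | succ k ih => exact ih.trans (pmono k)
  have p0pos : 0 < ∏ i, sinkhornL M 0 i (σ i) := Finset.prod_pos fun i _ => (key 0).2 i
  have hlim : Filter.Tendsto (fun k => ∏ i, sinkhornL M k i (σ i)) Filter.atTop
      (nhds (∏ i, S i (σ i))) := tendsto_finset_prod _ fun i _ => hconvL i (σ i)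
  have hSprod : ∏ i, sinkhornL M 0 i (σ i) ≤ ∏ i, S i (σ i) := ge_of_tendsto' hlim pge
  intro i
  rcases (hSnn i (σ i)).lt_or_eq with h | h
  · exact h
  · exfalso
    have hz : ∏ i', S i' (σ i') = 0 := Finset.prod_eq_zero (Finset.mem_univ i) h.symm
    have := p0pos.trans_le hSprod
    rw [hz] at this
    exact lt_irrefl 0 this
end

section
/- Let n be a positive integer, L : Fin n → Fin n → ℝ a nonnegative matrix whose every row sums to 1 and whose every column sum is positive, and let T be the column normalization of L (T i j = L i j / (∑_k L k j)). Let σ be a permutation of Fin n with L i (σ i) > 0 for all i. Then 0 < ∏_i L i (σ i) ≤ ∏_i T i (σ i) ≤ 1; the first inequality is an equality if and only if L is doubly stochastic, and the second is an equality if and only if T i (σ i) = 1 for all i. -/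
open Finset

/-- for a row-stochastic `L` with positive column sums, column
normalization `T`, and a positive diagonal `σ` of `L`, we have
`0 < ∏ i, L i (σ i) ≤ ∏ i, T i (σ i) ≤ 1`, where the first inequality is an
equality iff `L` is doubly stochastic and the second iff `T i (σ i) = 1` for
all `i`. -/
theorem diagonal_product_increases (n : ℕ) (hn : 0 < n)
    (L T : Fin n → Fin n → ℝ)
    (hLnn : ∀ i j, 0 ≤ L i j)
    (hLrow : ∀ i, (∑ j, L i j) = 1)
    (hLcol : ∀ j, 0 < (∑ i, L i j))
    (hT : ∀ i j, T i j = L i j / ∑ k, L k j)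
    (σ : Equiv.Perm (Fin n))
    (hσ : ∀ i, 0 < L i (σ i)) :
    0 < (∏ i, L i (σ i)) ∧
    (∏ i, L i (σ i)) ≤ (∏ i, T i (σ i)) ∧
    (∏ i, T i (σ i)) ≤ 1 ∧
    ((∏ i, L i (σ i)) = (∏ i, T i (σ i)) ↔ ∀ j, (∑ i, L i j) = 1) ∧
    ((∏ i, T i (σ i)) = 1 ↔ ∀ i, T i (σ i) = 1) := by
  set c : Fin n → ℝ := fun j => ∑ i, L i j with hc
  have hcpos : ∀ j, 0 < c j := hLcol
  have hsumc : ∑ j, c j = n := by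
    simp only [hc]
    rw [Finset.sum_comm]
    simp [hLrow]
  -- product over σ of c equals product of c
  have hprodσ : (∏ i, c (σ i)) = ∏ j, c j := Equiv.prod_comp σ c
  have hprodcpos : 0 < ∏ j, c j := Finset.prod_pos fun j _ => hcpos j
  have hLpos : 0 < ∏ i, L i (σ i) := Finset.prod_pos fun i _ => hσ i
  -- ∏ T = ∏ L / ∏ c
  have hTprod : (∏ i, T i (σ i)) = (∏ i, L i (σ i)) / ∏ j, c j := by
    have : (∏ i, T i (σ i)) = ∏ i, (L i (σ i) / c (σ i)) := by
      apply Finset.prod_congr rfl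
      intro i _
      rw [hT]
    rw [this, Finset.prod_div_distrib, hprodσ]
  -- ∏ c ≤ 1, via log
  have hlog_le : ∀ j : Fin n, Real.log (c j) ≤ c j - 1 :=
    fun j => Real.log_le_sub_one_of_pos (hcpos j)
  have hsum_sub : ∑ j, (c j - 1) = 0 := by
    rw [Finset.sum_sub_distrib, hsumc]
    simp
  have hlogsum : Real.log (∏ j, c j) = ∑ j, Real.log (c j) :=
    Real.log_prod fun j _ => (hcpos j).ne'
  have hprodc_le : (∏ j, c j) ≤ 1 := by
    have h1 : ∑ j, Real.log (c j) ≤ 0 := by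
      calc ∑ j, Real.log (c j) ≤ ∑ j, (c j - 1) :=
        Finset.sum_le_sum fun j _ => hlog_le j
      _ = 0 := hsum_sub
    have := Real.exp_le_exp.mpr (hlogsum ▸ h1)
    rwa [Real.exp_log hprodcpos, Real.exp_zero] at this
  -- ∏ c = 1 ↔ ∀ j, c j = 1
  have hprodc_iff : (∏ j, c j) = 1 ↔ ∀ j, c j = 1 := by
    constructor
    · intro h
      by_contra hne
      push_neg at hne
      obtain ⟨j₀, hj₀⟩ := hne
      have hstrict : ∑ j, Real.log (c j) < ∑ j, (c j - 1) :=
        Finset.sum_lt_sum (fun j _ => hlog_le j)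
          ⟨j₀, Finset.mem_univ _, Real.log_lt_sub_one_of_pos (hcpos j₀) hj₀⟩
      rw [hsum_sub, ← hlogsum] at hstrict
      have := Real.exp_lt_exp.mpr hstrict
      rw [Real.exp_log hprodcpos, Real.exp_zero, h] at this
      exact lt_irrefl 1 this
    · intro h; simp [h]
  -- T diagonal entries are in (0,1]
  have hTle : ∀ i, T i (σ i) ≤ 1 := by
    intro i
    rw [hT]
    apply div_le_one_of_le₀
    · exact Finset.single_le_sum (fun k _ => hLnn k (σ i)) (Finset.mem_univ i)
    · exact (hcpos (σ i)).le
  have hTpos : ∀ i, 0 < T i (σ i) := by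
    intro i
    rw [hT]
    exact div_pos (hσ i) (hcpos (σ i))
  refine ⟨hLpos, ?_, ?_, ?_, ?_⟩
  · rw [hTprod, le_div_iff₀ hprodcpos]
    nlinarith
  · rw [hTprod, div_le_one hprodcpos]
    calc (∏ i, L i (σ i)) ≤ ∏ i, c (σ i) :=
        Finset.prod_le_prod (fun i _ => (hLnn i (σ i)))
          (fun i _ => Finset.single_le_sum (fun k _ => hLnn k (σ i)) (Finset.mem_univ i))
      _ = ∏ j, c j := hprodσ
  · rw [hTprod]
    constructor
    · intro h
      have : (∏ j, c j) = 1 := by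
        field_simp at h
        nlinarith
      exact hprodc_iff.mp this
    · intro h
      have : (∏ j, c j) = 1 := hprodc_iff.mpr h
      rw [this, div_one]
  · constructor
    · intro h i
      have hrest : (∏ k ∈ Finset.univ.erase i, T k (σ k)) ≤ 1 :=
        Finset.prod_le_one (fun k _ => (hTpos k).le) (fun k _ => hTle k)
      have hsplit : T i (σ i) * ∏ k ∈ Finset.univ.erase i, T k (σ k) = 1 :=
        (Finset.mul_prod_erase Finset.univ (fun k => T k (σ k)) (Finset.mem_univ i)).trans h
      have : 1 ≤ T i (σ i) := by nlinarith [hTpos i]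
      exact le_antisymm (hTle i) this
    · intro h; simp [h]
end

section
/- Let n be a positive integer and S : Fin n → Fin n → ℝ a doubly stochastic matrix. Then ∑_{i,j} (S i j)² ≤ n, with equality if and only if S is a permutation matrix. Equivalently, (1/n) ∑_{i,j} (S i j)² = 1 if and only if there exists a permutation σ of Fin n with S i j = (if σ i = j then 1 else 0). -/
open Finset

/-- for a doubly stochastic matrix `S`, `∑ i j, (S i j)² ≤ n`, with
equality iff `S` is a permutation matrix; equivalently
`(1/n) ∑ i j, (S i j)² = 1` iff `S` is a permutation matrix. -/
theorem doubly_stochastic_sq_sum (n : ℕ) (hn : 0 < n)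
    (S : Fin n → Fin n → ℝ)
    (hSnn : ∀ i j, 0 ≤ S i j)
    (hSrow : ∀ i, (∑ j, S i j) = 1) (hScol : ∀ j, (∑ i, S i j) = 1) :
    (∑ i, ∑ j, (S i j) ^ 2) ≤ (n : ℝ) ∧
    ((∑ i, ∑ j, (S i j) ^ 2) = (n : ℝ) ↔
      ∃ σ : Equiv.Perm (Fin n), ∀ i j, S i j = if σ i = j then 1 else 0) ∧
    ((1 / (n : ℝ)) * (∑ i, ∑ j, (S i j) ^ 2) = 1 ↔
      ∃ σ : Equiv.Perm (Fin n), ∀ i j, S i j = if σ i = j then 1 else 0) := by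
  have hle1 : ∀ i j, S i j ≤ 1 := by
    intro i j
    calc S i j ≤ ∑ j', S i j' :=
          Finset.single_le_sum (fun j' _ => hSnn i j') (mem_univ j)
      _ = 1 := hSrow i
  have hsq : ∀ i j, (S i j) ^ 2 ≤ S i j := by
    intro i j
    rw [sq]
    exact mul_le_of_le_one_right (hSnn i j) (hle1 i j)
  have hsumS : (∑ i, ∑ j, S i j) = (n : ℝ) := by
    simp [hSrow]
  have hbound : (∑ i, ∑ j, (S i j) ^ 2) ≤ (n : ℝ) := by
    rw [← hsumS]
    exact Finset.sum_le_sum fun i _ => Finset.sum_le_sum fun j _ => hsq i j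
  have H2 : ((∑ i, ∑ j, (S i j) ^ 2) = (n : ℝ) ↔
      ∃ σ : Equiv.Perm (Fin n), ∀ i j, S i j = if σ i = j then 1 else 0) := by
    constructor
    · intro heq
      -- equality forces each S i j ∈ {0,1}
      have heq' : ∀ i ∈ (univ : Finset (Fin n)), (∑ j, (S i j)^2) = ∑ j, S i j := by
        have := (Finset.sum_eq_sum_iff_of_le
          (fun i (_ : i ∈ (univ : Finset (Fin n))) =>
            Finset.sum_le_sum fun j _ => hsq i j)).mp (by rw [heq, hsumS])
        exact fun i hi => this i hi
      have h01 : ∀ i j, S i j = 0 ∨ S i j = 1 := by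
        intro i j
        have := (Finset.sum_eq_sum_iff_of_le
          (fun j (_ : j ∈ (univ : Finset (Fin n))) => hsq i j)).mp (heq' i (mem_univ i))
        have h2 : (S i j)^2 = S i j := this j (mem_univ j)
        have : S i j * (S i j - 1) = 0 := by nlinarith [h2]
        rcases mul_eq_zero.mp this with h | h
        · exact Or.inl h
        · exact Or.inr (by linarith)
      -- each row has exactly one 1
      have hex : ∀ i, ∃ j, S i j = 1 := by
        intro i
        by_contra hcon
        push_neg at hcon
        have hz : ∀ j, S i j = 0 := fun j => (h01 i j).resolve_right (hcon j)
        have h0 : (0:ℝ) = 1 := by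
          rw [← hSrow i, Finset.sum_eq_zero (fun j _ => hz j)]
        linarith
      choose f hf using hex
      have hrow0 : ∀ i j, j ≠ f i → S i j = 0 := by
        intro i j hj
        by_contra h
        have h1 : S i j = 1 := (h01 i j).resolve_left h
        have hsub : ({j, f i} : Finset (Fin n)) ⊆ univ := subset_univ _
        have : (2 : ℝ) ≤ ∑ j', S i j' := by
          have := Finset.sum_le_sum_of_subset_of_nonneg hsub
            (fun j' _ _ => hSnn i j')
          rw [Finset.sum_pair hj] at this
          linarith [this, h1, hf i]
        linarith [hSrow i]
      have hinj : Function.Injective f := by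
        intro i1 i2 h12
        by_contra hne
        have hsub : ({i1, i2} : Finset (Fin n)) ⊆ univ := subset_univ _
        have : (2 : ℝ) ≤ ∑ i, S i (f i1) := by
          have := Finset.sum_le_sum_of_subset_of_nonneg hsub
            (fun i' _ _ => hSnn i' (f i1))
          rw [Finset.sum_pair hne] at this
          have h2 : S i2 (f i1) = 1 := h12 ▸ hf i2
          linarith [this, hf i1, h2]
        linarith [hScol (f i1)]
      let σ : Equiv.Perm (Fin n) := Equiv.ofBijective f (Finite.injective_iff_bijective.mp hinj)
      refine ⟨σ, fun i j => ?_⟩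
      by_cases hj : j = f i
      · subst hj
        simp [σ, Equiv.ofBijective, hf i]
      · have hne : σ i ≠ j := fun h => hj h.symm
        rw [if_neg hne, hrow0 i j hj]
    · rintro ⟨σ, hσ⟩
      have : ∀ i, (∑ j, (S i j)^2) = 1 := by
        intro i
        rw [Finset.sum_congr rfl (fun j _ => by rw [hσ i j])]
        simp
      simp [this]
  have hn' : (n : ℝ) ≠ 0 := Nat.cast_ne_zero.mpr hn.ne'
  refine ⟨hbound, H2, ?_⟩
  rw [show ((1 / (n : ℝ)) * (∑ i, ∑ j, (S i j) ^ 2) = 1) ↔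
      ((∑ i, ∑ j, (S i j) ^ 2) = (n : ℝ)) from by
    rw [one_div, inv_mul_eq_div, div_eq_one_iff_eq hn']]
  exact H2
end

section
/- Let n be a positive integer and M : Fin n → Fin n → ℝ a nonnegative matrix with at least one positive diagonal, and suppose the Sinkhorn iterates of M converge entrywise to a doubly stochastic matrix S. Then the Cooperative Index CI(M) := (1/n) ∑_{i,j} (S i j)² equals 1 if and only if M has exactly one positive diagonal; equivalently, S is a permutation matrix if and only if there is a unique permutation σ of Fin n with M i (σ i) > 0 for all i. -/
open Finset

lemma sinkhorn_scaling {n : ℕ} (M : Fin n → Fin n → ℝ) (hMnn : ∀ i j, 0 ≤ M i j)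
    (σ₀ : Equiv.Perm (Fin n)) (hσ₀ : ∀ i, 0 < M i (σ₀ i)) (k : ℕ) :
    ∃ d e : Fin n → ℝ, (∀ i, 0 < d i) ∧ (∀ j, 0 < e j) ∧
      ∀ i j, sinkhornL M k i j = d i * e j * M i j := by
  induction k with
  | zero =>
    refine ⟨fun i => (∑ k, M i k)⁻¹, fun _ => 1, fun i => ?_, fun _ => one_pos, fun i j => ?_⟩
    · exact inv_pos.2 (Finset.sum_pos' (fun k _ => hMnn i k) ⟨σ₀ i, mem_univ _, hσ₀ i⟩)
    · simp [sinkhornL, rowNorm, div_eq_mul_inv]; ring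
  | succ k ih =>
    obtain ⟨d, e, hd, he, hrep⟩ := ih
    set m : Fin n → ℝ := fun j => ∑ i, d i * M i j with hm
    have hmpos : ∀ j, 0 < m j := by
      intro j
      refine Finset.sum_pos' (fun i _ => mul_nonneg (hd i).le (hMnn i j)) ⟨σ₀.symm j, mem_univ _, ?_⟩
      have := hσ₀ (σ₀.symm j)
      rw [Equiv.apply_symm_apply] at this
      exact mul_pos (hd _) this
    have hcol : ∀ i j, colNorm (sinkhornL M k) i j = d i * (m j)⁻¹ * M i j := by
      intro i j
      have hsum : (∑ i', sinkhornL M k i' j) = e j * m j := by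
        rw [hm, Finset.mul_sum]
        exact Finset.sum_congr rfl fun i' _ => by rw [hrep]; ring
      rw [colNorm, hrep, hsum, div_eq_mul_inv, mul_inv,
        show d i * e j * M i j * ((e j)⁻¹ * (m j)⁻¹) = d i * M i j * (m j)⁻¹ * (e j * (e j)⁻¹) by
          ring, mul_inv_cancel₀ (he j).ne', mul_one]
      ring
    set p : Fin n → ℝ := fun i => ∑ j, (m j)⁻¹ * M i j with hp
    have hppos : ∀ i, 0 < p i := fun i =>
      Finset.sum_pos' (fun j _ => mul_nonneg (inv_pos.2 (hmpos j)).le (hMnn i j))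
        ⟨σ₀ i, mem_univ _, mul_pos (inv_pos.2 (hmpos _)) (hσ₀ i)⟩
    refine ⟨fun i => (p i)⁻¹, fun j => (m j)⁻¹, fun i => inv_pos.2 (hppos i),
      fun j => inv_pos.2 (hmpos j), fun i j => ?_⟩
    show rowNorm (colNorm (sinkhornL M k)) i j = _
    have hrsum : (∑ j', colNorm (sinkhornL M k) i j') = d i * p i := by
      rw [hp, Finset.mul_sum]
      exact Finset.sum_congr rfl fun j' _ => by rw [hcol]; ring
    rw [rowNorm, hcol, hrsum, div_eq_mul_inv, mul_inv,
      show d i * (m j)⁻¹ * M i j * ((d i)⁻¹ * (p i)⁻¹) =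
        (p i)⁻¹ * (m j)⁻¹ * M i j * (d i * (d i)⁻¹) by ring,
      mul_inv_cancel₀ (hd i).ne', mul_one]

/-- given convergence of the Sinkhorn iterates of `M` to a doubly
stochastic `S`, the Cooperative Index `CI(M) = (1/n) ∑ i j, (S i j)²` equals `1`
iff `M` has exactly one positive diagonal (equivalently, `S` is a permutation
matrix iff there is a unique positive diagonal of `M`). -/
theorem cooperative_index_eq_one_iff_unique_diagonal (n : ℕ) (hn : 0 < n)
    (M : Fin n → Fin n → ℝ)
    (hMnn : ∀ i j, 0 ≤ M i j)
    (hdiag : ∃ σ : Equiv.Perm (Fin n), ∀ i, 0 < M i (σ i))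
    (S : Fin n → Fin n → ℝ)
    (hSnn : ∀ i j, 0 ≤ S i j)
    (hSrow : ∀ i, (∑ j, S i j) = 1) (hScol : ∀ j, (∑ i, S i j) = 1)
    (hconvL : ∀ i j, Filter.Tendsto (fun k => sinkhornL M k i j) Filter.atTop (nhds (S i j)))
    (hconvT : ∀ i j, Filter.Tendsto (fun k => sinkhornT M k i j) Filter.atTop (nhds (S i j))) :
    ((1 / (n : ℝ)) * (∑ i, ∑ j, (S i j) ^ 2) = 1 ↔
      ∃! σ : Equiv.Perm (Fin n), ∀ i, 0 < M i (σ i)) ∧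
    ((∃ σ : Equiv.Perm (Fin n), ∀ i j, S i j = if σ i = j then 1 else 0) ↔
      ∃! σ : Equiv.Perm (Fin n), ∀ i, 0 < M i (σ i)) := by
  obtain ⟨σ₀, hσ₀⟩ := hdiag
  have hn' : (n : ℝ) ≠ 0 := Nat.cast_ne_zero.mpr hn.ne'
  -- zero pattern preservation
  have hzero : ∀ i j, M i j = 0 → S i j = 0 := by
    intro i j h
    have hz : ∀ k, sinkhornL M k i j = 0 := by
      intro k
      obtain ⟨d, e, _, _, hrep⟩ := sinkhorn_scaling M hMnn σ₀ hσ₀ k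
      rw [hrep, h, mul_zero]
    have h0 : Filter.Tendsto (fun k => sinkhornL M k i j) Filter.atTop (nhds 0) := by
      simp only [hz]; exact tendsto_const_nhds
    exact tendsto_nhds_unique (hconvL i j) h0
  have hpos : ∀ i j, 0 < S i j → 0 < M i j := by
    intro i j h
    rcases (hMnn i j).lt_or_eq with h' | h'
    · exact h'
    · exact absurd (hzero i j h'.symm) (by linarith)
  -- diagonal product invariant in the limit
  have hinv : ∀ τ : Equiv.Perm (Fin n),
      (∏ i, S i (τ i)) * (∏ i, M i (σ₀ i)) = (∏ i, S i (σ₀ i)) * (∏ i, M i (τ i)) := by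
    intro τ
    have key : ∀ k, (∏ i, sinkhornL M k i (τ i)) * (∏ i, M i (σ₀ i))
        = (∏ i, sinkhornL M k i (σ₀ i)) * (∏ i, M i (τ i)) := by
      intro k
      obtain ⟨d, e, hd, he, hrep⟩ := sinkhorn_scaling M hMnn σ₀ hσ₀ k
      have h1 : ∏ i, sinkhornL M k i (τ i) = ((∏ i, d i) * ∏ i, e (τ i)) * ∏ i, M i (τ i) := by
        simp only [hrep]
        rw [← Finset.prod_mul_distrib, ← Finset.prod_mul_distrib]
      have h2 : ∏ i, sinkhornL M k i (σ₀ i) = ((∏ i, d i) * ∏ i, e (σ₀ i)) * ∏ i, M i (σ₀ i) := by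
        simp only [hrep]
        rw [← Finset.prod_mul_distrib, ← Finset.prod_mul_distrib]
      rw [h1, h2, Equiv.prod_comp τ e, Equiv.prod_comp σ₀ e]
      ring
    have l1 : Filter.Tendsto (fun k => (∏ i, sinkhornL M k i (τ i)) * ∏ i, M i (σ₀ i))
        Filter.atTop (nhds ((∏ i, S i (τ i)) * ∏ i, M i (σ₀ i))) :=
      (tendsto_finset_prod _ fun i _ => hconvL i (τ i)).mul_const _
    have l2 : Filter.Tendsto (fun k => (∏ i, sinkhornL M k i (σ₀ i)) * ∏ i, M i (τ i))
        Filter.atTop (nhds ((∏ i, S i (σ₀ i)) * ∏ i, M i (τ i))) :=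
      (tendsto_finset_prod _ fun i _ => hconvL i (σ₀ i)).mul_const _
    have heq : (fun k => (∏ i, sinkhornL M k i (τ i)) * ∏ i, M i (σ₀ i))
        = fun k => (∏ i, sinkhornL M k i (σ₀ i)) * ∏ i, M i (τ i) := funext key
    exact tendsto_nhds_unique (heq ▸ l1) l2
  have hMσ₀ : 0 < ∏ i, M i (σ₀ i) := Finset.prod_pos fun i _ => hσ₀ i
  -- permutation matrix ↔ unique positive diagonal
  have hperm_iff : (∃ σ : Equiv.Perm (Fin n), ∀ i j, S i j = if σ i = j then 1 else 0) ↔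
      ∃! σ : Equiv.Perm (Fin n), ∀ i, 0 < M i (σ i) := by
    constructor
    · rintro ⟨σ, hσ⟩
      have hσdiag : ∀ i, 0 < M i (σ i) := fun i => hpos _ _ (by rw [hσ]; simp)
      refine ⟨σ, hσdiag, fun τ hτ => ?_⟩
      have hSσ : ∏ i, S i (σ i) = 1 := by simp [hσ]
      have hMσ : 0 < ∏ i, M i (σ i) := Finset.prod_pos fun i _ => hσdiag i
      have hMτ : 0 < ∏ i, M i (τ i) := Finset.prod_pos fun i _ => hτ i
      have h1 := hinv σ
      rw [hSσ, one_mul] at h1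
      have hSσ₀nn : 0 ≤ ∏ i, S i (σ₀ i) := Finset.prod_nonneg fun i _ => hSnn _ _
      have hSσ₀pos : 0 < ∏ i, S i (σ₀ i) := by nlinarith
      have h2 := hinv τ
      have hSτpos : 0 < ∏ i, S i (τ i) := by nlinarith [mul_pos hSσ₀pos hMτ]
      have hSτne : ∀ i, S i (τ i) ≠ 0 := by
        intro i hi
        rw [Finset.prod_eq_zero (mem_univ i) hi] at hSτpos
        exact lt_irrefl 0 hSτpos
      ext i
      have hne := hSτne i
      rw [hσ] at hne
      have hii : σ i = τ i := by
        by_contra hne'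
        exact hne (if_neg hne')
      exact congrArg Fin.val hii.symm
    · rintro ⟨σ, hσdiag, huniq⟩
      have hS' : (S : Matrix (Fin n) (Fin n) ℝ) ∈ doublyStochastic ℝ (Fin n) := by
        exact mem_doublyStochastic_iff_sum.2 ⟨hSnn, hSrow, hScol⟩
      obtain ⟨w, hw0, hw1, hwS⟩ := exists_eq_sum_perm_of_mem_doublyStochastic hS'
      have hentry : ∀ i j, S i j
          = ∑ τ : Equiv.Perm (Fin n), w τ * (if τ i = j then 1 else 0) := by
        intro i j
        conv_lhs => rw [← hwS]
        rw [Matrix.sum_apply]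
        refine Finset.sum_congr rfl fun τ _ => ?_
        simp [Equiv.Perm.permMatrix, PEquiv.toMatrix_apply, Equiv.toPEquiv_apply]
      have hwzero : ∀ τ, τ ≠ σ → w τ = 0 := by
        intro τ hτ
        by_contra hw
        have hwpos : 0 < w τ := (hw0 τ).lt_of_ne' hw
        have hSpos : ∀ i, 0 < S i (τ i) := by
          intro i
          rw [hentry]
          refine Finset.sum_pos' (fun ρ _ => mul_nonneg (hw0 ρ) (by split <;> norm_num))
            ⟨τ, mem_univ _, ?_⟩
          simpa using hwpos
        exact hτ (huniq τ fun i => hpos _ _ (hSpos i))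
      have hwσ : w σ = 1 := by
        rw [← hw1, Finset.sum_eq_single σ (fun τ _ hτ => hwzero τ hτ)
          (fun h => absurd (mem_univ σ) h)]
      refine ⟨σ, fun i j => ?_⟩
      rw [hentry i j, Finset.sum_eq_single σ (fun τ _ hτ => by rw [hwzero τ hτ, zero_mul])
        (fun h => absurd (mem_univ σ) h), hwσ, one_mul]
  -- CI = 1 ↔ permutation matrix
  have hCI_iff : (1 / (n : ℝ)) * (∑ i, ∑ j, (S i j) ^ 2) = 1 ↔
      ∃ σ : Equiv.Perm (Fin n), ∀ i j, S i j = if σ i = j then 1 else 0 := by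
    constructor
    · intro h
      have hle1 : ∀ i j, S i j ≤ 1 := by
        intro i j
        calc S i j ≤ ∑ j', S i j' :=
              Finset.single_le_sum (fun j' _ => hSnn i j') (mem_univ j)
          _ = 1 := hSrow i
      have hsum : ∑ i, ∑ j, S i j ^ 2 = n := by
        field_simp at h
        linarith
      have htot : ∑ i, ∑ j, (S i j - S i j ^ 2) = 0 := by
        simp only [Finset.sum_sub_distrib]
        rw [hsum]
        simp [hSrow]
      have h01 : ∀ i j, S i j = 0 ∨ S i j = 1 := by
        have hterm : ∀ i j, 0 ≤ S i j - S i j ^ 2 := fun i j => by nlinarith [hSnn i j, hle1 i j]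
        have hrow0 : ∀ i ∈ (univ : Finset (Fin n)), ∑ j, (S i j - S i j ^ 2) = 0 :=
          (Finset.sum_eq_zero_iff_of_nonneg
            (fun i _ => Finset.sum_nonneg fun j _ => hterm i j)).1 htot
        intro i j
        have := (Finset.sum_eq_zero_iff_of_nonneg (fun j _ => hterm i j)).1
          (hrow0 i (mem_univ i)) j (mem_univ j)
        have hfac : S i j * (1 - S i j) = 0 := by nlinarith
        rcases mul_eq_zero.1 hfac with h' | h'
        · exact Or.inl h'
        · exact Or.inr (by linarith)
      have hex : ∀ i, ∃ j, S i j = 1 := by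
        intro i
        by_contra h'
        push_neg at h'
        have : ∑ j, S i j = 0 := Finset.sum_eq_zero fun j _ =>
          (h01 i j).resolve_right (h' j)
        rw [hSrow i] at this
        norm_num at this
      choose f hf using hex
      have hinj : Function.Injective f := by
        intro i₁ i₂ h12
        by_contra hne
        have h2 : (2 : ℝ) ≤ ∑ i, S i (f i₂) := by
          calc (2 : ℝ) = S i₁ (f i₂) + S i₂ (f i₂) := by rw [← h12, hf i₁, h12, hf i₂]; norm_num
            _ = ∑ i ∈ ({i₁, i₂} : Finset (Fin n)), S i (f i₂) := (Finset.sum_pair (f := fun i => S i (f i₂)) hne).symm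
            _ ≤ ∑ i, S i (f i₂) :=
              Finset.sum_le_sum_of_subset_of_nonneg (subset_univ _) fun i _ _ => hSnn i _
        rw [hScol] at h2
        linarith
      refine ⟨Equiv.ofBijective f (Finite.injective_iff_bijective.mp hinj), fun i j => ?_⟩
      show S i j = if f i = j then 1 else 0
      by_cases hj : f i = j
      · rw [if_pos hj, ← hj, hf i]
      · rw [if_neg hj]
        rcases h01 i j with h' | h'
        · exact h'
        · exfalso
          have h2 : (2 : ℝ) ≤ ∑ j', S i j' := by
            calc (2 : ℝ) = S i (f i) + S i j := by rw [hf i, h']; norm_num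
              _ = ∑ j' ∈ ({f i, j} : Finset (Fin n)), S i j' := (Finset.sum_pair (f := fun j' => S i j') hj).symm
              _ ≤ ∑ j', S i j' :=
                Finset.sum_le_sum_of_subset_of_nonneg (subset_univ _) fun j' _ _ => hSnn i j'
          rw [hSrow] at h2
          linarith
    · rintro ⟨σ, hσ⟩
      have hsq : ∀ i j, S i j ^ 2 = if σ i = j then (1 : ℝ) else 0 := by
        intro i j
        rw [hσ]
        split <;> norm_num
      simp only [hsq]
      simp [Finset.sum_ite_eq, hn']
  exact ⟨hCI_iff.trans hperm_iff, hperm_iff⟩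
end

section
/- Let n be a positive integer and M : Fin n → Fin n → ℝ a nonnegative matrix. Then M has exactly one positive diagonal (there is a unique permutation σ of Fin n with M i (σ i) > 0 for all i) if and only if M is a permutation of an upper-triangular matrix, i.e., there exist permutations σ, τ of Fin n such that the matrix B defined by B i j = M (σ i) (τ j) satisfies B i i > 0 for all i and B i j = 0 whenever i > j. -/
open Finset

private lemma exists_cycle_perm {n : ℕ} (f : Fin n → Fin n) (j : Fin n) (p : ℕ)
    (hp : 0 < p) (hpj : f^[p] j = j) :
    ∃ π : Equiv.Perm (Fin n), π j = f j ∧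
      ∀ x, π x = x ∨ ((∃ t, f^[t] j = x) ∧ π x = f x) := by
  classical
  set O : Set (Fin n) := {x | ∃ t, f^[t] j = x} with hO
  have hback : ∀ s : ℕ, f^[p - 1] (f (f^[s] j)) = f^[s] j := by
    intro s
    have h1 : f (f^[s] j) = f^[s + 1] j := (Function.iterate_succ_apply' f s j).symm
    rw [h1, ← Function.iterate_add_apply]
    have : p - 1 + (s + 1) = s + p := by omega
    rw [this, Function.iterate_add_apply, hpj]
  have hinj : Function.Injective (fun x => if x ∈ O then f x else x) := by
    intro x y h
    simp only at h
    by_cases hx : x ∈ O <;> by_cases hy : y ∈ O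
    · rw [if_pos hx, if_pos hy] at h
      obtain ⟨s, rfl⟩ := hx
      obtain ⟨t, rfl⟩ := hy
      have := congrArg (f^[p - 1]) h
      rwa [hback, hback] at this
    · rw [if_pos hx, if_neg hy] at h
      obtain ⟨s, rfl⟩ := hx
      exfalso
      apply hy
      rw [← h]
      exact ⟨s + 1, Function.iterate_succ_apply' f s j⟩
    · rw [if_neg hx, if_pos hy] at h
      obtain ⟨t, rfl⟩ := hy
      exfalso
      apply hx
      rw [h]
      exact ⟨t + 1, Function.iterate_succ_apply' f t j⟩
    · rwa [if_neg hx, if_neg hy] at h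
  refine ⟨Equiv.ofBijective _ (Finite.injective_iff_bijective.mp hinj), ?_, ?_⟩
  · have hjO : j ∈ O := ⟨0, rfl⟩
    simp [Equiv.ofBijective_apply, if_pos hjO]
  · intro x
    by_cases hx : x ∈ O
    · exact Or.inr ⟨hx, by simp [Equiv.ofBijective_apply, if_pos hx]⟩
    · exact Or.inl (by simp [Equiv.ofBijective_apply, if_neg hx])

/-- a nonnegative matrix `M` has exactly one positive diagonal iff
`M` is a permutation of an upper-triangular matrix (with positive main
diagonal). -/
theorem unique_positive_diagonal_iff_triangular (n : ℕ) (hn : 0 < n)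
    (M : Fin n → Fin n → ℝ)
    (hMnn : ∀ i j, 0 ≤ M i j) :
    (∃! σ : Equiv.Perm (Fin n), ∀ i, 0 < M i (σ i)) ↔
      ∃ σ τ : Equiv.Perm (Fin n),
        (∀ i, 0 < M (σ i) (τ i)) ∧
        ∀ i j : Fin n, j < i → M (σ i) (τ j) = 0 := by
  constructor
  · rintro ⟨σ₀, hσ₀pos, hσ₀uniq⟩
    classical
    set A : Fin n → Fin n → ℝ := fun i j => M i (σ₀ j) with hA
    have hAd : ∀ i, 0 < A i i := hσ₀pos
    have hAuniq : ∀ π : Equiv.Perm (Fin n), (∀ i, 0 < A i (π i)) → π = 1 := by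
      intro π hπ
      have h1 : π.trans σ₀ = σ₀ := hσ₀uniq (π.trans σ₀) (fun i => hπ i)
      apply Equiv.ext
      intro i
      have h2 : σ₀ (π i) = σ₀ i := DFunLike.congr_fun h1 i
      exact σ₀.injective h2
    set r : Fin n → Fin n → Prop := fun i j => 0 < A i j ∧ i ≠ j with hr
    have hirr : ∀ i, ¬ Relation.TransGen r i i := by
      intro i₀ hcyc
      set S : Set (Fin n) := {x | Relation.TransGen r i₀ x ∧ Relation.TransGen r x i₀}
        with hS
      have hi₀S : i₀ ∈ S := ⟨hcyc, hcyc⟩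
      have step : ∀ x ∈ S, ∃ y, r x y ∧ y ∈ S := by
        rintro x ⟨hx1, hx2⟩
        obtain ⟨y, hxy, hy⟩ := Relation.TransGen.head'_iff.mp hx2
        exact ⟨y, hxy, ⟨hx1.trans (Relation.TransGen.single hxy),
          Relation.TransGen.trans_right hy hcyc⟩⟩
      choose! f hf1 hf2 using step
      have hiter : ∀ t, f^[t] i₀ ∈ S := by
        intro t
        induction t with
        | zero => exact hi₀S
        | succ t ih => rw [Function.iterate_succ_apply']; exact hf2 _ ih
      obtain ⟨a, b, hab, heq⟩ : ∃ a b : ℕ, a < b ∧ f^[a] i₀ = f^[b] i₀ := by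
        obtain ⟨a, b, hne, h⟩ := Finite.exists_ne_map_eq_of_infinite (fun t : ℕ => f^[t] i₀)
        rcases hne.lt_or_gt with h' | h'
        · exact ⟨a, b, h', h⟩
        · exact ⟨b, a, h', h.symm⟩
      have hpj : f^[b - a] (f^[a] i₀) = f^[a] i₀ := by
        rw [← Function.iterate_add_apply]
        have : b - a + a = b := by omega
        rw [this]
        exact heq.symm
      obtain ⟨π, hπj, hπ⟩ := exists_cycle_perm f (f^[a] i₀) (b - a)
        (Nat.sub_pos_of_lt hab) hpj
      have hπpos : ∀ x, 0 < A x (π x) := by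
        intro x
        rcases hπ x with h | ⟨⟨t, ht⟩, h⟩
        · rw [h]; exact hAd x
        · rw [h]
          have hmem : x ∈ S := by
            rw [← ht, ← Function.iterate_add_apply]
            exact hiter _
          exact (hf1 _ hmem).1
      have h1 : π = 1 := hAuniq π hπpos
      have hjS : f^[a] i₀ ∈ S := hiter a
      have h2 : π (f^[a] i₀) = f^[a] i₀ := by rw [h1]; rfl
      rw [hπj] at h2
      exact (hf1 _ hjS).2 h2.symm
    haveI : IsPartialOrder (Fin n) (Relation.ReflTransGen r) :=
      { refl := fun a => Relation.ReflTransGen.refl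
        trans := fun a b c hab hbc => hab.trans hbc
        antisymm := by
          intro a b hab hba
          by_contra hne
          have h1 : Relation.TransGen r a b := by
            rcases Relation.reflTransGen_iff_eq_or_transGen.mp hab with h | h
            · exact absurd h.symm hne
            · exact h
          exact hirr a (Relation.TransGen.trans_left h1 hba) }
    obtain ⟨s, hs, hrs⟩ := extend_partialOrder (Relation.ReflTransGen r)
    haveI := hs
    haveI : DecidableRel s := Classical.decRel s
    set l := Finset.univ.sort s with hl
    have hlen : l.length = n := by
      rw [hl, Finset.length_sort, Finset.card_univ, Fintype.card_fin]
    have hnodup : l.Nodup := Finset.univ.sort_nodup s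
    have hsorted : l.Pairwise s := Finset.univ.pairwise_sort s
    set ρ : Fin n → Fin n := fun i => l.get (Fin.cast hlen.symm i) with hρ
    have hρinj : Function.Injective ρ := by
      intro x y h
      have h2 := List.nodup_iff_injective_get.mp hnodup h
      have h3 := congrArg Fin.val h2
      exact Fin.ext h3
    set ρe : Equiv.Perm (Fin n) := Equiv.ofBijective ρ
      (Finite.injective_iff_bijective.mp hρinj) with hρe
    refine ⟨ρe, ρe.trans σ₀, fun i => hσ₀pos (ρe i), ?_⟩
    intro i j hji
    by_contra hne0
    have hpos : 0 < A (ρe i) (ρe j) :=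
      lt_of_le_of_ne (hMnn _ _) (Ne.symm hne0)
    have hne : ρe i ≠ ρe j := by
      intro h
      exact (ne_of_gt hji) (ρe.injective h)
    have hrel : r (ρe i) (ρe j) := ⟨hpos, hne⟩
    have hs1 : s (ρe i) (ρe j) := hrs _ _ (Relation.ReflTransGen.single hrel)
    have hs2 : s (ρe j) (ρe i) := by
      have hlt : (Fin.cast hlen.symm j) < (Fin.cast hlen.symm i) := hji
      exact List.pairwise_iff_get.mp hsorted _ _ hlt
    exact hne (hs.toIsPartialOrder.toAntisymm.antisymm _ _ hs1 hs2)
  · rintro ⟨σ, τ, hdiag, hzero⟩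
    refine ⟨σ.symm.trans τ, ?_, ?_⟩
    · intro i
      have h := hdiag (σ.symm i)
      rwa [Equiv.apply_symm_apply] at h
    · intro π' hπ'
      have hge : ∀ i : Fin n, i ≤ τ.symm (π' (σ i)) := by
        intro i
        by_contra hlt
        push_neg at hlt
        have hz := hzero i (τ.symm (π' (σ i))) hlt
        rw [Equiv.apply_symm_apply] at hz
        exact absurd hz (ne_of_gt (hπ' (σ i)))
      have hsum : ∑ i : Fin n, ((i : ℕ)) = ∑ i : Fin n, ((τ.symm (π' (σ i)) : ℕ)) := by
        have h1 : ∑ i : Fin n, ((τ.symm (π' (σ i)) : ℕ))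
            = ∑ i : Fin n, (((σ.trans (π'.trans τ.symm)) i : ℕ)) := rfl
        rw [h1, Equiv.sum_comp (σ.trans (π'.trans τ.symm)) (fun i : Fin n => (i : ℕ))]
      have heqi : ∀ i ∈ Finset.univ, ((i : Fin n) : ℕ) = ((τ.symm (π' (σ i)) : Fin n) : ℕ) :=
        (Finset.sum_eq_sum_iff_of_le (fun i _ => Fin.le_def.mp (hge i))).1 hsum
      have key : ∀ i, π' (σ i) = τ i := by
        intro i
        have h2 : τ.symm (π' (σ i)) = i := Fin.ext (heqi i (Finset.mem_univ i)).symm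
        calc π' (σ i) = τ (τ.symm (π' (σ i))) := (τ.apply_symm_apply _).symm
        _ = τ i := by rw [h2]
      apply Equiv.ext
      intro y
      show π' y = τ (σ.symm y)
      rw [← key (σ.symm y), Equiv.apply_symm_apply]
end

section
/- Let n be a positive integer and A : Fin n → Fin n → ℝ an arbitrary real matrix. Then A has exactly one nonzero diagonal (there is a unique permutation σ of Fin n with A i (σ i) ≠ 0 for all i) if and only if there exist permutations σ, τ of Fin n such that the matrix B defined by B i j = A (σ i) (τ j) satisfies B i i ≠ 0 for all i and B i j = 0 whenever i > j. -/
open Finset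

private lemma perm_ge_id_eq_id {n : ℕ} (μ : Equiv.Perm (Fin n))
    (h : ∀ i, i ≤ μ i) : ∀ i, μ i = i := by
  intro i
  by_contra hne
  have hlt : (i : ℕ) < (μ i : ℕ) := lt_of_le_of_ne (h i) fun e => hne (Fin.ext e).symm
  have hsum : ∑ j : Fin n, ((μ j : ℕ)) = ∑ j : Fin n, (j : ℕ) :=
    Equiv.sum_comp μ (fun j => (j : ℕ))
  have hstrict : ∑ j : Fin n, (j : ℕ) < ∑ j : Fin n, ((μ j : ℕ)) :=
    Finset.sum_lt_sum (fun j _ => h j) ⟨i, Finset.mem_univ i, hlt⟩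
  omega

private lemma no_cycle_of_unique {n : ℕ} (A' : Fin n → Fin n → ℝ)
    (hdiag : ∀ i, A' i i ≠ 0)
    (huniq : ∀ π : Equiv.Perm (Fin n), (∀ i, A' i (π i) ≠ 0) → π = 1)
    (a : Fin n) : ¬ Relation.TransGen (fun a b => a ≠ b ∧ A' a b ≠ 0) a a := by
  classical
  set rel : Fin n → Fin n → Prop := fun a b => a ≠ b ∧ A' a b ≠ 0 with hrel
  intro hcyc
  have hstep : ∀ x, Relation.TransGen rel x a →
      ∃ z, rel x z ∧ Relation.ReflTransGen rel z a := by
    intro x hx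
    exact Relation.TransGen.head'_iff.mp hx
  choose! f hf1 hf2 using hstep
  have hP : ∀ x, Relation.TransGen rel x a → Relation.TransGen rel (f x) a := by
    intro x hx
    rcases Relation.reflTransGen_iff_eq_or_transGen.mp (hf2 x hx) with h | h
    · rw [← h]; exact hcyc
    · exact h
  have hiter : ∀ m, Relation.TransGen rel (f^[m] a) a := by
    intro m
    induction m with
    | zero => exact hcyc
    | succ m ih => rw [Function.iterate_succ_apply']; exact hP _ ih
  obtain ⟨m, m', hne, heq⟩ := Finite.exists_ne_map_eq_of_infinite (fun m : ℕ => f^[m] a)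
  wlog hlt : m < m' generalizing m m'
  · exact this m' m hne.symm heq.symm (by omega)
  set x : Fin n := f^[m] a with hx
  have hper : Function.IsPeriodicPt f (m' - m) x := by
    have : f^[m' - m] (f^[m] a) = f^[m] a := by
      rw [← Function.iterate_add_apply]
      have : m' - m + m = m' := by omega
      rw [this]
      exact heq.symm
    exact this
  set k := Function.minimalPeriod f x with hk
  have hkpos : 0 < k := hper.minimalPeriod_pos (by omega)
  have horb : ∀ j, Relation.TransGen rel (f^[j] x) a := by
    intro j
    have : f^[j] x = f^[j + m] a := by rw [Function.iterate_add_apply]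
    rw [this]; exact hiter _
  have hfx : rel x (f x) := hf1 x (horb 0)
  have hk1 : 1 < k := by
    by_contra hnk
    push_neg at hnk
    have hkeq : k = 1 := by omega
    have hfix : f x = x := by
      have h := Function.iterate_minimalPeriod (f := f) (x := x)
      rw [← hk, hkeq, Function.iterate_one] at h
      exact h
    exact hfx.1 hfix.symm
  set l : List (Fin n) := (List.range k).map (fun j => f^[j] x) with hl
  have hlen : l.length = k := by simp [hl]
  have hnodup : l.Nodup := by
    refine List.Nodup.map_on ?_ List.nodup_range
    intro p hp q hq hpq
    rw [List.mem_range] at hp hq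
    exact (Function.iterate_eq_iterate_iff_of_lt_minimalPeriod hp hq).mp hpq
  set π := l.formPerm with hπ
  have hgetl : ∀ (j : ℕ) (hj : j < l.length), l[j] = f^[j] x := by
    intro j hj
    simp [hl]
  have hstep' : ∀ (j : ℕ) (hj : j < l.length), π l[j] = f (l[j]) := by
    intro j hj
    rw [hπ, List.formPerm_apply_getElem l hnodup j hj]
    rw [hgetl, hgetl]
    rw [hlen]
    have hmod : f^[(j + 1) % k] x = f^[j + 1] x := by
      rw [hk]; exact Function.iterate_mod_minimalPeriod_eq
    rw [hmod, Function.iterate_succ_apply']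
  have hπall : ∀ i, A' i (π i) ≠ 0 := by
    intro i
    by_cases hi : i ∈ l
    · obtain ⟨j, hj, rfl⟩ := List.mem_iff_getElem.mp hi
      rw [hstep' j hj]
      have := hf1 l[j] (by rw [hgetl j hj]; exact horb j)
      exact this.2
    · rw [hπ, List.formPerm_apply_of_notMem hi]
      exact hdiag i
  have hπ1 : π = 1 := huniq π hπall
  have hxl : x ∈ l := by
    rw [hl]
    refine List.mem_map.mpr ⟨0, List.mem_range.mpr hkpos, rfl⟩
  have h0 : (0 : ℕ) < l.length := by omega
  have : π l[0] = f l[0] := hstep' 0 h0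
  rw [hπ1] at this
  simp only [Equiv.Perm.one_apply] at this
  rw [hgetl 0 h0] at this
  simp only [Function.iterate_zero_apply] at this
  exact hfx.1 this

/-- an arbitrary real matrix `A` has exactly one nonzero diagonal
iff `A` is a permutation of an upper-triangular matrix (with nonzero main
diagonal). -/
theorem unique_nonzero_diagonal_iff_triangular (n : ℕ) (hn : 0 < n)
    (A : Fin n → Fin n → ℝ) :
    (∃! σ : Equiv.Perm (Fin n), ∀ i, A i (σ i) ≠ 0) ↔
      ∃ σ τ : Equiv.Perm (Fin n),
        (∀ i, A (σ i) (τ i) ≠ 0) ∧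
        ∀ i j : Fin n, j < i → A (σ i) (τ j) = 0 := by
  classical
  constructor
  · rintro ⟨σ₀, hσ₀, huniq₀⟩
    set A' : Fin n → Fin n → ℝ := fun i j => A i (σ₀ j) with hA'
    have hdiag : ∀ i, A' i i ≠ 0 := hσ₀
    have huniq : ∀ π : Equiv.Perm (Fin n), (∀ i, A' i (π i) ≠ 0) → π = 1 := by
      intro π hπ
      have h1 : π.trans σ₀ = σ₀ := huniq₀ (π.trans σ₀) (fun i => hπ i)
      refine Equiv.ext fun i => ?_
      have h2 : σ₀ (π i) = σ₀ i := DFunLike.congr_fun h1 i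
      simpa using σ₀.injective h2
    set rel : Fin n → Fin n → Prop := fun a b => a ≠ b ∧ A' a b ≠ 0 with hrel
    set R := Relation.TransGen rel with hR
    have hirr : ∀ a, ¬ R a a := no_cycle_of_unique A' hdiag huniq
    set rnk : Fin n → ℕ := fun x => #{y | R y x} with hrnk
    have hrank : ∀ a b, rel a b → rnk a < rnk b := by
      intro a b hab
      apply Finset.card_lt_card
      constructor
      · intro y hy
        simp only [Finset.mem_filter, Finset.mem_univ, true_and] at hy ⊢
        exact hy.trans (Relation.TransGen.single hab)
      · intro hsub
        have ha : a ∈ ({y | R y b} : Finset (Fin n)) := by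
          simp only [Finset.mem_filter, Finset.mem_univ, true_and]
          exact Relation.TransGen.single hab
        have := hsub ha
        simp only [Finset.mem_filter, Finset.mem_univ, true_and] at this
        exact hirr a this
    set g := Tuple.sort rnk with hg
    refine ⟨g, g.trans σ₀, fun i => hdiag (g i), ?_⟩
    intro i j hji
    by_contra h
    have hij : i ≠ j := ne_of_gt hji
    have hne : g i ≠ g j := fun e => hij (g.injective e)
    have hr : rel (g i) (g j) := ⟨hne, h⟩
    have h1 : rnk (g i) < rnk (g j) := hrank _ _ hr
    have h2 : rnk (g j) ≤ rnk (g i) := Tuple.monotone_sort rnk (le_of_lt hji)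
    omega
  · rintro ⟨σ, τ, hdiag, htri⟩
    refine ⟨σ.symm.trans τ, fun i => ?_, ?_⟩
    · have := hdiag (σ.symm i)
      simpa using this
    · intro ρ hρ
      set μ : Equiv.Perm (Fin n) := σ.trans (ρ.trans τ.symm) with hμ
      have hle : ∀ i, i ≤ μ i := by
        intro i
        by_contra h
        push_neg at h
        have h0 := htri i (μ i) h
        apply hρ (σ i)
        have : τ (μ i) = ρ (σ i) := by simp [hμ]
        rw [this] at h0
        exact h0
      have heq := perm_ge_id_eq_id μ hle
      ext x
      have h1 : μ (σ.symm x) = σ.symm x := heq _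
      have h2 : τ.symm (ρ x) = σ.symm x := by
        simpa [hμ] using h1
      simp only [Equiv.trans_apply]
      rw [← h2]
      simp
end

section
/- Let n be a positive integer and A : Fin (n+1) → Fin (n+1) → ℝ a matrix with exactly one nonzero diagonal, witnessed by the unique permutation σ with A i (σ i) ≠ 0 for all i. Suppose A i₀ j₀ ≠ 0 for some indices i₀, j₀, and let A' : Fin n → Fin n → ℝ be the submatrix of A obtained by deleting row i₀ and column j₀ (A' a b = A (i₀.succAbove a) (j₀.succAbove b)). Then A' has at most one nonzero diagonal, i.e., there is at most one permutation π of Fin n with A' a (π a) ≠ 0 for all a; moreover, if j₀ = σ i₀, then A' has exactly one nonzero diagonal. -/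
open Finset

/-- Extend a permutation of `Fin n` to a permutation of `Fin (n+1)` sending `i₀ ↦ j₀`. -/
def extPerm {n : ℕ} (i₀ j₀ : Fin (n + 1)) (π : Equiv.Perm (Fin n)) :
    Equiv.Perm (Fin (n + 1)) :=
  (finSuccEquiv' i₀).trans ((Equiv.optionCongr π).trans (finSuccEquiv' j₀).symm)

lemma extPerm_at {n : ℕ} (i₀ j₀ : Fin (n + 1)) (π : Equiv.Perm (Fin n)) :
    extPerm i₀ j₀ π i₀ = j₀ := by
  simp [extPerm]

lemma extPerm_succAbove {n : ℕ} (i₀ j₀ : Fin (n + 1)) (π : Equiv.Perm (Fin n)) (a : Fin n) :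
    extPerm i₀ j₀ π (i₀.succAbove a) = j₀.succAbove (π a) := by
  simp [extPerm, EquivFunctor.map]

/-- Observation 1: if `A` has exactly one nonzero diagonal `σ`
and `A i₀ j₀ ≠ 0`, then the submatrix obtained by deleting row `i₀` and column
`j₀` has at most one nonzero diagonal; moreover it has exactly one nonzero
diagonal when `j₀ = σ i₀`. -/
theorem submatrix_at_most_one_nonzero_diagonal (n : ℕ) (hn : 0 < n)
    (A : Fin (n + 1) → Fin (n + 1) → ℝ)
    (σ : Equiv.Perm (Fin (n + 1)))
    (hσ : ∀ i, A i (σ i) ≠ 0)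
    (huniq : ∀ σ' : Equiv.Perm (Fin (n + 1)), (∀ i, A i (σ' i) ≠ 0) → σ' = σ)
    (i₀ j₀ : Fin (n + 1)) (hA : A i₀ j₀ ≠ 0) :
    (∀ π₁ π₂ : Equiv.Perm (Fin n),
        (∀ a, A (i₀.succAbove a) (j₀.succAbove (π₁ a)) ≠ 0) →
        (∀ a, A (i₀.succAbove a) (j₀.succAbove (π₂ a)) ≠ 0) → π₁ = π₂) ∧
    (j₀ = σ i₀ →
      ∃! π : Equiv.Perm (Fin n), ∀ a, A (i₀.succAbove a) (j₀.succAbove (π a)) ≠ 0) := by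
  have key : ∀ π : Equiv.Perm (Fin n),
      (∀ a, A (i₀.succAbove a) (j₀.succAbove (π a)) ≠ 0) →
      ∀ a, j₀.succAbove (π a) = σ (i₀.succAbove a) := by
    intro π hπ a
    have hext : ∀ i, A i (extPerm i₀ j₀ π i) ≠ 0 := by
      intro i
      rcases eq_or_ne i i₀ with rfl | hi
      · rw [extPerm_at]; exact hA
      · obtain ⟨b, rfl⟩ := Fin.exists_succAbove_eq hi
        rw [extPerm_succAbove]; exact hπ b
    have := huniq _ hext
    rw [← this, extPerm_succAbove]
  constructor
  · intro π₁ π₂ h₁ h₂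
    exact Equiv.ext fun a =>
      j₀.succAbove_right_injective ((key π₁ h₁ a).trans (key π₂ h₂ a).symm)
  · intro hj
    set e : Option (Fin n) ≃ Option (Fin n) :=
      (finSuccEquiv' i₀).symm.trans (σ.trans (finSuccEquiv' j₀)) with he
    have hsome : ∀ a : Fin n, e (some a) = some (Option.get ((finSuccEquiv' j₀) (σ (i₀.succAbove a)))
        (by
          rw [Option.isSome_iff_ne_none]
          intro h
          have : σ (i₀.succAbove a) = j₀ := by
            have := congrArg (finSuccEquiv' j₀).symm h
            simpa using this
          exact i₀.succAbove_ne a (σ.injective (this.trans (hj.trans rfl))))) := by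
      intro a
      simp only [he, Equiv.trans_apply, finSuccEquiv'_symm_some]
      exact (Option.some_get _).symm
    refine ⟨Equiv.removeNone e, ?_, ?_⟩
    · intro a
      have h := Equiv.removeNone_some e ⟨_, hsome a⟩
      rw [hsome a] at h
      have : j₀.succAbove (Equiv.removeNone e a) = σ (i₀.succAbove a) := by
        have := congrArg (finSuccEquiv' j₀).symm (congrArg some (Option.some_injective _ h))
        simpa using this
      rw [this]; exact hσ _
    · intro π hπ
      refine Equiv.ext fun a => ?_
      have h1 := key π hπ a
      have h := Equiv.removeNone_some e ⟨_, hsome a⟩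
      rw [hsome a] at h
      have h2 : j₀.succAbove (Equiv.removeNone e a) = σ (i₀.succAbove a) := by
        have := congrArg (finSuccEquiv' j₀).symm (congrArg some (Option.some_injective _ h))
        simpa using this
      exact j₀.succAbove_right_injective (h1.trans h2.symm)
end

section
/- Let n be a positive integer and A : Fin n → Fin n → ℝ a matrix with exactly one nonzero diagonal (there is a unique permutation σ of Fin n with A i (σ i) ≠ 0 for all i). If some row of A has exactly one nonzero element, or some column of A has exactly one nonzero element, then A is a permutation of an upper-triangular matrix: there exist permutations σ', τ of Fin n such that B i j = A (σ' i) (τ j) satisfies B i i ≠ 0 for all i and B i j = 0 whenever i > j. -/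
open Finset

/-- Observation 2: if `A` has exactly one nonzero diagonal and
some row or some column of `A` has exactly one nonzero element, then `A` is a
permutation of an upper-triangular matrix. -/
theorem unique_diagonal_single_nonzero_row_or_col (n : ℕ) (hn : 0 < n)
    (A : Fin n → Fin n → ℝ)
    (huniq : ∃! σ : Equiv.Perm (Fin n), ∀ i, A i (σ i) ≠ 0)
    (hrc : (∃ i, ∃! j, A i j ≠ 0) ∨ (∃ j, ∃! i, A i j ≠ 0)) :
    ∃ σ' τ : Equiv.Perm (Fin n),
      (∀ i, A (σ' i) (τ i) ≠ 0) ∧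
      ∀ i j : Fin n, j < i → A (σ' i) (τ j) = 0 := by
  classical
  obtain ⟨σ, hσ, hσuniq⟩ := huniq
  set B : Fin n → Fin n → ℝ := fun i j => A i (σ j) with hBdef
  have hBdiag : ∀ i, B i i ≠ 0 := hσ
  have hBuniq : ∀ π : Equiv.Perm (Fin n), (∀ i, B i (π i) ≠ 0) → π = 1 := by
    intro π hπ
    have h1 : π.trans σ = σ := hσuniq (π.trans σ) hπ
    ext i
    have := congrArg (fun e : Equiv.Perm (Fin n) => e i) h1
    simp only [Equiv.trans_apply] at this
    exact congrArg Fin.val (σ.injective this)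
  set r : Fin n → Fin n → Prop := fun i j => B i j ≠ 0 ∧ i ≠ j with hrdef
  set s : Fin n → Fin n → Prop := Relation.TransGen r with hsdef
  -- acyclicity of r
  have hirr : ∀ a, ¬ s a a := by
    intro a hcyc
    set C : Set (Fin n) := {y | Relation.ReflTransGen r a y ∧ Relation.TransGen r y a}
      with hCdef
    have haC : a ∈ C := ⟨Relation.ReflTransGen.refl, hcyc⟩
    have hnext : ∀ y ∈ C, ∃ z, z ∈ C ∧ r y z := by
      rintro y ⟨hay, hya⟩
      rcases Relation.TransGen.head'_iff.mp hya with ⟨b, hyb, hba⟩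
      exact ⟨b, ⟨hay.tail hyb, Relation.TransGen.trans_right hba hcyc⟩, hyb⟩
    set g : Fin n → Fin n := fun y => if h : y ∈ C then (hnext y h).choose else y with hgdef
    have hg : ∀ y ∈ C, g y ∈ C ∧ r y (g y) := by
      intro y hy
      simp only [hgdef, dif_pos hy]
      exact (hnext y hy).choose_spec
    have hiterC : ∀ k : ℕ, g^[k] a ∈ C := by
      intro k
      induction k with
      | zero => exact haC
      | succ k ih =>
        rw [Function.iterate_succ_apply']
        exact (hg _ ih).1
    -- pigeonhole: find a periodic point
    obtain ⟨k₁, k₂, hkne, hkeq⟩ := Finite.exists_ne_map_eq_of_infinite (fun k : ℕ => g^[k] a)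
    wlog hk12 : k₁ < k₂ generalizing k₁ k₂
    · exact this k₂ k₁ hkne.symm hkeq.symm (by omega)
    set x : Fin n := g^[k₁] a with hxdef
    set p : ℕ := k₂ - k₁ with hpdef
    have hp : 0 < p := by omega
    have hper : g^[p] x = x := by
      have h1 : p + k₁ = k₂ := by omega
      calc g^[p] x = g^[p + k₁] a := (Function.iterate_add_apply g p k₁ a).symm
        _ = g^[k₂] a := by rw [h1]
        _ = x := hkeq.symm
    have hperiod : ∀ q m : ℕ, g^[m + q * p] x = g^[m] x := by
      intro q
      induction q with
      | zero => simp
      | succ q ih =>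
        intro m
        have : m + (q + 1) * p = (m + q * p) + p := by ring
        rw [this, Function.iterate_add_apply, hper, ih]
    set O : Finset (Fin n) := (Finset.range p).image (fun k => g^[k] x) with hOdef
    have hOmem : ∀ m : ℕ, g^[m] x ∈ O := by
      intro m
      have h1 : g^[m] x = g^[m % p] x := by
        have e : m % p + m / p * p = m := Nat.mod_add_div' m p
        calc g^[m] x = g^[m % p + m / p * p] x := by rw [e]
          _ = g^[m % p] x := hperiod _ _
      rw [h1]
      exact Finset.mem_image.mpr ⟨m % p, Finset.mem_range.mpr (Nat.mod_lt _ hp), rfl⟩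
    have hOC : ∀ y ∈ O, y ∈ C := by
      intro y hy
      obtain ⟨k, -, rfl⟩ := Finset.mem_image.mp hy
      rw [hxdef, ← Function.iterate_add_apply]
      exact hiterC _
    have hxO : x ∈ O := by simpa using hOmem 0
    -- the candidate permutation
    set f : Fin n → Fin n := fun y => if y ∈ O then g y else y with hfdef
    have hgO : ∀ y ∈ O, g y ∈ O := by
      intro y hy
      obtain ⟨k, -, rfl⟩ := Finset.mem_image.mp hy
      have e1 : g (g^[k] x) = g^[k + 1] x := (Function.iterate_succ_apply' g k x).symm
      rw [e1]
      exact hOmem _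
    have hginj : ∀ y ∈ O, ∀ z ∈ O, g y = g z → y = z := by
      intro y hy z hz hgyz
      obtain ⟨k, -, rfl⟩ := Finset.mem_image.mp hy
      obtain ⟨l, -, rfl⟩ := Finset.mem_image.mp hz
      have h1 : ∀ m : ℕ, g^[p - 1] (g (g^[m] x)) = g^[m] x := by
        intro m
        have e1 : g (g^[m] x) = g^[m + 1] x := (Function.iterate_succ_apply' g m x).symm
        rw [e1, ← Function.iterate_add_apply]
        have e2 : p - 1 + (m + 1) = m + 1 * p := by omega
        rw [e2]
        exact hperiod 1 m
      calc g^[k] x = g^[p - 1] (g (g^[k] x)) := (h1 k).symm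
        _ = g^[p - 1] (g (g^[l] x)) := by rw [hgyz]
        _ = g^[l] x := h1 l
    have hfinj : Function.Injective f := by
      intro y z hyz
      simp only [hfdef] at hyz
      by_cases hy : y ∈ O <;> by_cases hz : z ∈ O
      · rw [if_pos hy, if_pos hz] at hyz; exact hginj y hy z hz hyz
      · rw [if_pos hy, if_neg hz] at hyz; exact absurd (hyz ▸ hgO y hy) hz
      · rw [if_neg hy, if_pos hz] at hyz; exact absurd (hyz.symm ▸ hgO z hz) hy
      · rwa [if_neg hy, if_neg hz] at hyz
    set π : Equiv.Perm (Fin n) := Equiv.ofBijective f (Finite.injective_iff_bijective.mp hfinj)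
      with hπdef
    have hπapp : ∀ y, π y = f y := fun y => rfl
    have hπdiag : ∀ i, B i (π i) ≠ 0 := by
      intro i
      rw [hπapp]
      by_cases hi : i ∈ O
      · rw [hfdef]; simp only [if_pos hi]
        exact (hg i (hOC i hi)).2.1
      · rw [hfdef]; simp only [if_neg hi]
        exact hBdiag i
    have hπ1 : π = 1 := hBuniq π hπdiag
    have hgx : g x ≠ x := fun h => ((hg x (hOC x hxO)).2.2 h.symm)
    have : π x = x := by rw [hπ1]; rfl
    rw [hπapp, hfdef] at this
    simp only [if_pos hxO] at this
    exact hgx this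
  -- rank function
  set rank : Fin n → ℕ := fun y => (Finset.univ.filter (fun z => s z y)).card with hrankdef
  have hranklt : ∀ x y, s x y → rank x < rank y := by
    intro x y hxy
    apply Finset.card_lt_card
    rw [Finset.ssubset_iff_of_subset]
    · exact ⟨x, Finset.mem_filter.mpr ⟨Finset.mem_univ x, hxy⟩,
        fun hx => hirr x (Finset.mem_filter.mp hx).2⟩
    · intro z hz
      rw [Finset.mem_filter] at hz ⊢
      exact ⟨hz.1, hz.2.trans hxy⟩
  set key : Fin n → ℕ := fun y => rank y * n + y.val with hkeydef
  have hkeylt : ∀ x y, s x y → key x < key y := by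
    intro x y hxy
    have h1 : rank x < rank y := hranklt x y hxy
    have h2 : x.val < n := x.isLt
    have h3 : y.val < n := y.isLt
    simp only [hkeydef]
    nlinarith
  have hkeyinj : Function.Injective key := by
    intro x y hxy
    simp only [hkeydef] at hxy
    have hx : x.val < n := x.isLt
    have hy : y.val < n := y.isLt
    have hxy' : x.val + rank x * n = y.val + rank y * n := by omega
    have h1 := congrArg (· % n) hxy'
    simp only [Nat.add_mul_mod_self_right] at h1
    rw [Nat.mod_eq_of_lt hx, Nat.mod_eq_of_lt hy] at h1
    exact Fin.ext h1
  set ρ : Equiv.Perm (Fin n) := Tuple.sort key with hρdef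
  have hmono : StrictMono (key ∘ ρ) :=
    (Tuple.monotone_sort key).strictMono_of_injective (hkeyinj.comp ρ.injective)
  refine ⟨ρ, ρ.trans σ, ?_, ?_⟩
  · intro i
    simpa using hBdiag (ρ i)
  · intro i j hji
    by_contra hne
    have hBne : B (ρ i) (ρ j) ≠ 0 := hne
    have hρne : ρ i ≠ ρ j := fun h => ne_of_gt hji (ρ.injective h)
    have hr : r (ρ i) (ρ j) := ⟨hBne, hρne⟩
    have hs : s (ρ i) (ρ j) := Relation.TransGen.single hr
    have h1 : key (ρ i) < key (ρ j) := hkeylt _ _ hs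
    have h2 : key (ρ j) < key (ρ i) := hmono hji
    omega
end

section
/- Let n be a positive integer and A : Fin n → Fin n → ℝ a matrix whose main diagonal is its only nonzero diagonal: A i i ≠ 0 for all i, and the identity is the unique permutation σ of Fin n with A i (σ i) ≠ 0 for all i. Then for every k ≥ 2 and every injective function t : Fin k → Fin n, the cyclic product vanishes: ∏_{i : Fin k} A (t i) (t (i + 1)) = 0, where i + 1 is taken modulo k (so the last factor is A (t (k-1)) (t 0)). -/
open Finset

/-- Observation 3: if the main diagonal of `A` is its only
nonzero diagonal, then every cyclic product over `k ≥ 2` distinct indices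
vanishes: for any injective `t : Fin (k+2) → Fin n`,
`∏ i, A (t i) (t (i + 1)) = 0` (indices of `Fin (k+2)` taken mod `k+2`, so the
last factor is `A (t (k+1)) (t 0)`). -/
theorem cyclic_products_vanish (n : ℕ) (hn : 0 < n)
    (A : Fin n → Fin n → ℝ)
    (hdiag : ∀ i, A i i ≠ 0)
    (huniq : ∀ σ : Equiv.Perm (Fin n), (∀ i, A i (σ i) ≠ 0) → σ = 1) :
    ∀ (k : ℕ) (t : Fin (k + 2) → Fin n), Function.Injective t →
      (∏ i : Fin (k + 2), A (t i) (t (i + 1))) = 0 := by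
  intro k t ht
  by_contra h
  have hne : ∀ i : Fin (k + 2), A (t i) (t (i + 1)) ≠ 0 := by
    intro i hi
    exact h (Finset.prod_eq_zero (Finset.mem_univ i) hi)
  set f : Fin (k + 2) ↪ Fin n := ⟨t, ht⟩ with hf
  set σ : Equiv.Perm (Fin n) := (finRotate (k + 2)).viaFintypeEmbedding f with hσ
  have hσA : ∀ i, A i (σ i) ≠ 0 := by
    intro i
    by_cases hmem : i ∈ Set.range f
    · obtain ⟨j, rfl⟩ := hmem
      rw [hσ, Equiv.Perm.viaFintypeEmbedding_apply_image]
      simpa [hf, finRotate_succ_apply] using hne j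
    · rw [hσ, Equiv.Perm.viaFintypeEmbedding_apply_notMem_range _ _ hmem]
      exact hdiag i
  have h1 := huniq σ hσA
  have : σ (t 0) = t 1 := by
    have := Equiv.Perm.viaFintypeEmbedding_apply_image (finRotate (k+2)) f 0
    simpa [hf, finRotate_succ_apply] using this
  rw [h1] at this
  simp only [Equiv.Perm.one_apply] at this
  exact (by simp : (0 : Fin (k+2)) ≠ 1) (ht this)
end

section
/- Let N be a positive integer and C : Fin N → Fin N → ℝ a matrix with every entry equal to 0 or 1 that is a permutation of an upper-triangular matrix: there exist permutations σ, τ of Fin N such that B i j = C (σ i) (τ j) satisfies B i i = 1 for all i and B i j = 0 whenever i > j. Then C has a positive diagonal, and if the Sinkhorn iterates of C converge entrywise to a doubly stochastic matrix S, then S is a permutation matrix (equivalently, CI(C) = (1/N) ∑_{i,j} (S i j)² = 1). -/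
open Finset

lemma sinkhornL_eq_zero {n : ℕ} (M : Fin n → Fin n → ℝ) {i j : Fin n} (h : M i j = 0) :
    ∀ k, sinkhornL M k i j = 0
  | 0 => by simp [sinkhornL, rowNorm, h]
  | k + 1 => by simp [sinkhornL, rowNorm, colNorm, sinkhornL_eq_zero M h k]

/-- a 0/1 consistency matrix `C` that is a permutation of an
upper-triangular matrix (with ones on the main diagonal) has a positive
diagonal, and if its Sinkhorn iterates converge entrywise to a doubly stochastic
matrix `S`, then `S` is a permutation matrix; equivalently `CI(C) = 1`. -/
theorem triangular_consistency_CI_eq_one (N : ℕ) (hN : 0 < N)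
    (C : Fin N → Fin N → ℝ)
    (hC : ∀ i j, C i j = 0 ∨ C i j = 1)
    (σ τ : Equiv.Perm (Fin N))
    (hdiag : ∀ i, C (σ i) (τ i) = 1)
    (htri : ∀ i j : Fin N, j < i → C (σ i) (τ j) = 0) :
    (∃ ρ : Equiv.Perm (Fin N), ∀ i, 0 < C i (ρ i)) ∧
    ∀ S : Fin N → Fin N → ℝ,
      (∀ i j, 0 ≤ S i j) → (∀ i, (∑ j, S i j) = 1) → (∀ j, (∑ i, S i j) = 1) →
      (∀ i j, Filter.Tendsto (fun k => sinkhornL C k i j) Filter.atTop (nhds (S i j))) →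
      (∀ i j, Filter.Tendsto (fun k => sinkhornT C k i j) Filter.atTop (nhds (S i j))) →
      (∃ ρ : Equiv.Perm (Fin N), ∀ i j, S i j = if ρ i = j then 1 else 0) ∧
        (1 / (N : ℝ)) * (∑ i, ∑ j, (S i j) ^ 2) = 1 := by
  set ρ : Equiv.Perm (Fin N) := σ.symm.trans τ with hρ
  have hρapp : ∀ i, ρ i = τ (σ.symm i) := fun i => rfl
  have hpos : ∀ i, 0 < C i (ρ i) := by
    intro i
    have h := hdiag (σ.symm i)
    rw [Equiv.apply_symm_apply] at h
    rw [hρapp, h]; norm_num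
  refine ⟨⟨ρ, hpos⟩, ?_⟩
  intro S hSnn hrow hcol hL _hT
  have hSzero : ∀ i j, C i j = 0 → S i j = 0 := by
    intro i j h
    have h1 : Filter.Tendsto (fun k => sinkhornL C k i j) Filter.atTop (nhds 0) := by
      simpa [sinkhornL_eq_zero C h] using
        (tendsto_const_nhds : Filter.Tendsto (fun _ : ℕ => (0:ℝ)) Filter.atTop (nhds 0))
    exact tendsto_nhds_unique (hL i j) h1
  have hBtri : ∀ i j : Fin N, j < i → S (σ i) (τ j) = 0 := fun i j h => hSzero _ _ (htri i j h)
  have hBrow : ∀ i, ∑ j, S (σ i) (τ j) = 1 := by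
    intro i
    rw [Equiv.sum_comp τ (fun j => S (σ i) j)]
    exact hrow (σ i)
  have hBcol : ∀ j, ∑ i, S (σ i) (τ j) = 1 := by
    intro j
    rw [Equiv.sum_comp σ (fun i => S i (τ j))]
    exact hcol (τ j)
  have hdiag1 : ∀ i : Fin N, S (σ i) (τ i) = 1 := by
    suffices key : ∀ n : ℕ, ∀ i : Fin N, i.val = n → S (σ i) (τ i) = 1 from
      fun i => key i.val i rfl
    intro n
    induction n using Nat.strong_induction_on with
    | _ n IH =>
      intro i hi
      have ih : ∀ m : Fin N, m < i → S (σ m) (τ m) = 1 := fun m hm =>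
        IH m.val (hi ▸ hm) m rfl
      have hrowzero : ∀ m : Fin N, m < i → S (σ m) (τ i) = 0 := by
        intro m hm
        have hmm := ih m hm
        have herase : ∑ k ∈ univ.erase m, S (σ m) (τ k) = 0 := by
          have h2 := Finset.add_sum_erase univ (fun k => S (σ m) (τ k)) (mem_univ m)
          have h3 := hBrow m
          rw [hmm] at h2
          linarith
        exact (Finset.sum_eq_zero_iff_of_nonneg (fun k _ => hSnn _ _)).mp herase i
          (mem_erase.mpr ⟨(ne_of_lt hm).symm, mem_univ i⟩)
      have hz : ∀ m, m ≠ i → S (σ m) (τ i) = 0 := by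
        intro m hm
        rcases lt_or_gt_of_ne hm with h | h
        · exact hrowzero m h
        · exact hBtri m i h
      have := hBcol i
      calc S (σ i) (τ i) = ∑ m, S (σ m) (τ i) :=
            (Finset.sum_eq_single_of_mem i (mem_univ i) (fun b _ hb => hz b hb)).symm
        _ = 1 := this
  have hoff : ∀ i j : Fin N, i ≠ j → S (σ i) (τ j) = 0 := by
    intro i j hne
    have herase : ∑ k ∈ univ.erase i, S (σ i) (τ k) = 0 := by
      have h2 := Finset.add_sum_erase univ (fun k => S (σ i) (τ k)) (mem_univ i)
      have h3 := hBrow i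
      rw [hdiag1 i] at h2
      linarith
    exact (Finset.sum_eq_zero_iff_of_nonneg (fun k _ => hSnn _ _)).mp herase j
      (mem_erase.mpr ⟨hne.symm, mem_univ j⟩)
  have hSform : ∀ i j, S i j = if ρ i = j then 1 else 0 := by
    intro i j
    have hiff : (ρ i = j) ↔ (σ.symm i = τ.symm j) := by
      rw [hρapp, Equiv.apply_eq_iff_eq_symm_apply]
    by_cases h : ρ i = j
    · rw [if_pos h]
      have h' := hiff.mp h
      have := hdiag1 (σ.symm i)
      rwa [Equiv.apply_symm_apply, h', Equiv.apply_symm_apply] at this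
    · rw [if_neg h]
      have h' : σ.symm i ≠ τ.symm j := fun hc => h (hiff.mpr hc)
      have := hoff (σ.symm i) (τ.symm j) h'
      rwa [Equiv.apply_symm_apply, Equiv.apply_symm_apply] at this
  refine ⟨⟨ρ, hSform⟩, ?_⟩
  have hsq : ∀ i j, (S i j) ^ 2 = if ρ i = j then 1 else 0 := by
    intro i j
    rw [hSform]
    split <;> norm_num
  have hsum : (∑ i, ∑ j, (S i j) ^ 2) = (N : ℝ) := by
    simp [hsq, Finset.sum_ite_eq]
  rw [hsum]
  have hN' : (N : ℝ) ≠ 0 := Nat.cast_ne_zero.mpr hN.ne'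
  field_simp
end
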